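/- arXiv:1311.0767 — 9 statements merged into one kernel-verified Lean document; each statement's English description precedes it below -/
import Mathlib

section
/- Let m ≥ 1, let K be a symmetric m×m integer matrix and W a skew-symmetric m×m integer matrix such that the rational matrix K − W is invertible, and let t ∈ ℤ^m have greatest common divisor of its entries equal to 1 and satisfy K_{ii} ≡ t_i (mod 2) for every index i. Form the 2m×2m rational block matrix 𝒦 = [[K, W], [Wᵀ, −K]], the charge vector τ = (t, t) ∈ ℤ^{2m}, and the time-reversal vector χ = (0, t) ∈ ℤ^{2m}; then 𝒦 is invertible, and if d is a positive even integer such that the additive subgroup {lᵀ𝒦⁻¹τ : l ∈ ℤ^{2m}} of ℚ equals (1/d)·ℤ, then d·(χᵀ𝒦⁻¹τ) is an even integer. -/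
open Matrix

/-- In `ZMod 2`, the quadratic form of a symmetric matrix reduces to its diagonal part. -/
lemma quad_diag_char2 {ι : Type*} [Fintype ι] [DecidableEq ι]
    (M : Matrix ι ι (ZMod 2)) (hM : M.IsSymm) (a : ι → ZMod 2) :
    a ⬝ᵥ (M *ᵥ a) = ∑ i, M i i * a i := by
  classical
  have hxx : ∀ x : ZMod 2, x * x = x := by decide
  have hadd : ∀ x : ZMod 2, x + x = 0 := by decide
  set f : ι × ι → ZMod 2 := fun p => a p.1 * M p.1 p.2 * a p.2 with hf
  have hoff : ∑ p ∈ (Finset.univ ×ˢ Finset.univ).filter (fun p : ι × ι => ¬ p.1 = p.2),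
      f p = 0 := by
    refine Finset.sum_involution (fun p _ => p.swap) ?_ ?_ ?_ ?_
    · intro p hp
      have hsym : M p.2 p.1 = M p.1 p.2 := hM.apply p.1 p.2
      have : f p.swap = f p := by simp only [hf, Prod.fst_swap, Prod.snd_swap, hsym]; ring
      rw [this]; exact hadd _
    · intro p hp _
      simp only [Finset.mem_filter] at hp
      intro hcon
      exact hp.2 (congrArg Prod.snd hcon)
    · intro p hp
      simp only [Finset.mem_filter, Finset.mem_product, Finset.mem_univ, true_and] at hp ⊢
      exact fun hc => hp (hc.symm)
    · intro p hp
      exact Prod.swap_swap p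
  have hsplit := Finset.sum_filter_add_sum_filter_not (Finset.univ ×ˢ Finset.univ)
      (fun p : ι × ι => p.1 = p.2) f
  have hdiag : ∑ p ∈ (Finset.univ ×ˢ Finset.univ).filter (fun p : ι × ι => p.1 = p.2),
      f p = ∑ i, M i i * a i := by
    refine Finset.sum_nbij' (fun p : ι × ι => p.1) (fun i : ι => (i, i)) ?_ ?_ ?_ ?_ ?_
    · intro p hp; exact Finset.mem_univ _
    · intro i hi; simp
    · intro p hp
      simp only [Finset.mem_filter] at hp
      exact Prod.ext rfl hp.2
    · intro i hi; rfl
    · intro p hp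
      simp only [Finset.mem_filter] at hp
      simp only [hf, ← hp.2]
      rw [mul_comm (a p.1) (M p.1 p.1), mul_assoc, hxx]
  have hdot : a ⬝ᵥ (M *ᵥ a) = ∑ p ∈ Finset.univ ×ˢ Finset.univ, f p := by
    rw [Finset.sum_product]
    simp only [hf, dotProduct, Matrix.mulVec, Finset.mul_sum, mul_assoc]
  rw [hdot, ← hsplit, hdiag, hoff, add_zero]

/-- Over `ℤ`, `wᵀ W w = 0` for skew-symmetric `W`. -/
lemma skew_quad_zero {ι : Type*} [Fintype ι] (W : Matrix ι ι ℤ) (hW : Wᵀ = -W)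
    (w : ι → ℤ) : w ⬝ᵥ (W *ᵥ w) = 0 := by
  have h1 : w ⬝ᵥ (W *ᵥ w) = (Wᵀ *ᵥ w) ⬝ᵥ w := by
    rw [Matrix.dotProduct_mulVec, Matrix.mulVec_transpose]
  rw [hW, Matrix.neg_mulVec, neg_dotProduct, dotProduct_comm] at h1
  rw [dotProduct_comm]
  linarith

/-- (Theorem on Abelian spin Hall insulators.)
Let `K` be a symmetric `m × m` integer matrix, `W` skew-symmetric, with `K - W` invertible
over `ℚ`, and `t ∈ ℤᵐ` with `gcd` of entries `1` and `K i i ≡ t i (mod 2)`.  Form the block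
matrix `𝒦 = [[K, W], [Wᵀ, -K]]`, `τ = (t, t)`, `χ = (0, t)`.  Then `𝒦` is invertible, and
if `d` is a positive even integer with `{lᵀ 𝒦⁻¹ τ : l ∈ ℤ^{2m}} = (1/d) ℤ`, then
`d · (χᵀ 𝒦⁻¹ τ)` is an even integer. -/
theorem spinHall_even_charge_even_invariant (m : ℕ) (hm : 1 ≤ m)
    (K W : Matrix (Fin m) (Fin m) ℤ)
    (hK : K.IsSymm) (hW : Wᵀ = -W)
    (hKW : IsUnit (((K - W).map (Int.cast : ℤ → ℚ)).det))
    (t : Fin m → ℤ)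
    (ht : Finset.univ.gcd t = 1)
    (hpar : ∀ i, K i i ≡ t i [ZMOD 2]) :
    let 𝒦 : Matrix (Fin m ⊕ Fin m) (Fin m ⊕ Fin m) ℚ :=
      Matrix.fromBlocks (K.map (Int.cast : ℤ → ℚ)) (W.map (Int.cast : ℤ → ℚ))
        (Wᵀ.map (Int.cast : ℤ → ℚ)) (-(K.map (Int.cast : ℤ → ℚ)))
    let τ : Fin m ⊕ Fin m → ℚ := Sum.elim (fun i => (t i : ℚ)) (fun i => (t i : ℚ))
    let χ : Fin m ⊕ Fin m → ℚ := Sum.elim 0 (fun i => (t i : ℚ))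
    IsUnit 𝒦.det ∧
      ∀ d : ℤ, 0 < d → Even d →
        {x : ℚ | ∃ l : Fin m ⊕ Fin m → ℤ, x = (fun i => (l i : ℚ)) ⬝ᵥ (𝒦⁻¹ *ᵥ τ)} =
          {x : ℚ | ∃ n : ℤ, x = (n : ℚ) / (d : ℚ)} →
        ∃ k : ℤ, (d : ℚ) * (χ ⬝ᵥ (𝒦⁻¹ *ᵥ τ)) = 2 * (k : ℚ) := by
  classical
  intro 𝒦 τ χ
  set K' : Matrix (Fin m) (Fin m) ℚ := K.map (Int.cast : ℤ → ℚ) with hK'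
  set W' : Matrix (Fin m) (Fin m) ℚ := W.map (Int.cast : ℤ → ℚ) with hW'
  have hWm : Wᵀ.map (Int.cast : ℤ → ℚ) = -W' := by
    rw [hW]; ext i j; simp [Matrix.map_apply, hW']
  have hK'symm : K'ᵀ = K' := by
    ext i j; simp [hK', Matrix.map_apply, Matrix.transpose_apply, hK.apply i j]
  have hW'skew : W'ᵀ = -W' := by
    ext i j
    have := congrFun (congrFun hW i) j
    simp only [Matrix.transpose_apply, Matrix.neg_apply] at this ⊢
    simp [hW', Matrix.map_apply, this]
  set A : Matrix (Fin m) (Fin m) ℚ := K' - W' with hA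
  have hAmap : A = (K - W).map (Int.cast : ℤ → ℚ) := by
    ext i j; simp [hA, hK', hW', Matrix.map_apply]
  have hAdet : IsUnit A.det := by rw [hAmap]; exact hKW
  set B : Matrix (Fin m) (Fin m) ℚ := K' + W' with hB
  have hBtrans : Aᵀ = B := by
    rw [hA, Matrix.transpose_sub, hK'symm, hW'skew, hB, sub_neg_eq_add]
  have hBdet : IsUnit B.det := by
    have := Matrix.det_transpose A
    rw [hBtrans] at this
    rw [this]; exact hAdet
  set Ai : Matrix (Fin m) (Fin m) ℚ := A⁻¹ with hAi
  set Bi : Matrix (Fin m) (Fin m) ℚ := B⁻¹ with hBi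
  have hA1 : Ai * A = 1 := Matrix.nonsing_inv_mul A hAdet
  have hB1 : Bi * B = 1 := Matrix.nonsing_inv_mul B hBdet
  have hA2 : A * Ai = 1 := Matrix.mul_nonsing_inv A hAdet
  set P : Matrix (Fin m) (Fin m) ℚ := (2:ℚ)⁻¹ • (Ai + Bi) with hP
  set Q : Matrix (Fin m) (Fin m) ℚ := (2:ℚ)⁻¹ • (Ai - Bi) with hQ
  set M : Matrix (Fin m ⊕ Fin m) (Fin m ⊕ Fin m) ℚ := Matrix.fromBlocks P Q (-Q) (-P)
    with hM
  have h𝒦 : 𝒦 = Matrix.fromBlocks K' W' (-W') (-K') := by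
    show Matrix.fromBlocks K' W' (Wᵀ.map _) (-K') = _
    rw [hWm]
  have half : ∀ X : Matrix (Fin m) (Fin m) ℚ, (2:ℚ)⁻¹ • (X + X) = X := by
    intro X
    rw [← two_smul ℚ X, smul_smul]
    norm_num
  have hMleft : M * 𝒦 = 1 := by
    rw [hM, h𝒦, Matrix.fromBlocks_multiply]
    have e11 : P * K' + Q * (-W') = 1 := by
      rw [hP, hQ, Matrix.smul_mul, Matrix.smul_mul, ← smul_add]
      have : (Ai + Bi) * K' + (Ai - Bi) * (-W') = Ai * A + Bi * B := by
        rw [hA, hB]; noncomm_ring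
      rw [this, hA1, hB1, half]
    have e12 : P * W' + Q * (-K') = 0 := by
      rw [hP, hQ, Matrix.smul_mul, Matrix.smul_mul, ← smul_add]
      have : (Ai + Bi) * W' + (Ai - Bi) * (-K') = -(Ai * A) + Bi * B := by
        rw [hA, hB]; noncomm_ring
      rw [this, hA1, hB1, neg_add_cancel, smul_zero]
    have hnegQ : -Q = (2:ℚ)⁻¹ • (Bi - Ai) := by rw [hQ, ← smul_neg, neg_sub]
    have hnegP : -P = (2:ℚ)⁻¹ • (-(Ai + Bi)) := by rw [hP, smul_neg]
    have e21 : (-Q) * K' + (-P) * (-W') = 0 := by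
      rw [hnegQ, hnegP, Matrix.smul_mul, Matrix.smul_mul, ← smul_add]
      have : (Bi - Ai) * K' + (-(Ai + Bi)) * (-W') = -(Ai * A) + Bi * B := by
        rw [hA, hB]; noncomm_ring
      rw [this, hA1, hB1, neg_add_cancel, smul_zero]
    have e22 : (-Q) * W' + (-P) * (-K') = 1 := by
      rw [hnegQ, hnegP, Matrix.smul_mul, Matrix.smul_mul, ← smul_add]
      have : (Bi - Ai) * W' + (-(Ai + Bi)) * (-K') = Ai * A + Bi * B := by
        rw [hA, hB]; noncomm_ring
      rw [this, hA1, hB1, half]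
    rw [e11, e12, e21, e22, Matrix.fromBlocks_one]
  have hInvertible : Invertible 𝒦 := invertibleOfLeftInverse 𝒦 M hMleft
  have hUnit : IsUnit 𝒦.det := Matrix.isUnit_det_of_invertible 𝒦
  refine ⟨hUnit, ?_⟩
  have hInv : 𝒦⁻¹ = M := Matrix.inv_eq_left_inv hMleft
  set t' : Fin m → ℚ := fun i => (t i : ℚ) with ht'
  set u : Fin m → ℚ := Ai *ᵥ t' with hu
  have hq : 𝒦⁻¹ *ᵥ τ = Sum.elim u (-u) := by
    rw [hInv, hM]
    show Matrix.fromBlocks P Q (-Q) (-P) *ᵥ Sum.elim t' t' = _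
    rw [Matrix.fromBlocks_mulVec]
    have hcl : (Sum.elim t' t') ∘ Sum.inl = t' := rfl
    have hcr : (Sum.elim t' t') ∘ Sum.inr = t' := rfl
    rw [hcl, hcr]
    have hPQ : P *ᵥ t' + Q *ᵥ t' = u := by
      rw [← Matrix.add_mulVec, hP, hQ, ← smul_add]
      have : Ai + Bi + (Ai - Bi) = Ai + Ai := by abel
      rw [this, half, hu]
    have hPQ' : (-Q) *ᵥ t' + (-P) *ᵥ t' = -u := by
      rw [Matrix.neg_mulVec, Matrix.neg_mulVec, ← neg_add, ← hPQ]
      rw [add_comm (P *ᵥ t') (Q *ᵥ t')]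
    rw [hPQ, hPQ']
  have hAu : A *ᵥ u = t' := by
    rw [hu, Matrix.mulVec_mulVec, hA2, Matrix.one_mulVec]
  intro d hd hdeven hset
  have hd0 : (d : ℚ) ≠ 0 := Int.cast_ne_zero.mpr (by omega)
  -- each coordinate of u is in (1/d)ℤ
  have hcoord : ∀ i : Fin m, ∃ n : ℤ, (d : ℚ) * u i = (n : ℚ) := by
    intro i
    have hmem : u i ∈ {x : ℚ | ∃ l : Fin m ⊕ Fin m → ℤ,
        x = (fun i => (l i : ℚ)) ⬝ᵥ (𝒦⁻¹ *ᵥ τ)} := by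
      refine ⟨Pi.single (Sum.inl i) 1, ?_⟩
      have hfun : (fun j => ((Pi.single (Sum.inl i) 1 : Fin m ⊕ Fin m → ℤ) j : ℚ))
          = Pi.single (Sum.inl i) (1:ℚ) := by
        funext j
        by_cases h : j = Sum.inl i <;> simp [Pi.single_apply, h]
      rw [hfun, single_dotProduct, one_mul, hq]
      rfl
    rw [hset] at hmem
    obtain ⟨n, hn⟩ := hmem
    exact ⟨n, by rw [hn]; field_simp⟩
  choose w hw using hcoord
  -- integer relation: (K - W) *ᵥ w = d • t
  have hAw : A *ᵥ (fun i => (w i : ℚ)) = fun i => ((d * t i : ℤ) : ℚ) := by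
    have : (fun i => (w i : ℚ)) = (d:ℚ) • u := by
      funext i; rw [Pi.smul_apply, smul_eq_mul, hw i]
    rw [this, Matrix.mulVec_smul, hAu]
    funext i
    push_cast
    rfl
  have hIntRel : (K - W) *ᵥ w = fun i => d * t i := by
    funext i
    have := congrFun hAw i
    rw [hAmap] at this
    have hlhs : ((((K - W) *ᵥ w) i : ℤ) : ℚ) = (((K - W).map (Int.cast : ℤ → ℚ)) *ᵥ
        (fun j => (w j : ℚ))) i := by
      simp only [Matrix.mulVec, dotProduct, Matrix.map_apply, Matrix.sub_apply]
      push_cast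
      rfl
    have hfin : ((((K - W) *ᵥ w) i : ℤ) : ℚ) = ((d * t i : ℤ) : ℚ) := by rw [hlhs, this]
    exact_mod_cast hfin
  -- parity of t ⬝ᵥ w
  have hskew : w ⬝ᵥ (W *ᵥ w) = 0 := skew_quad_zero W hW w
  have hquadInt : w ⬝ᵥ (K *ᵥ w) = d * (w ⬝ᵥ t) := by
    have h1 : w ⬝ᵥ ((K - W) *ᵥ w) = w ⬝ᵥ (fun i => d * t i) := by rw [hIntRel]
    rw [Matrix.sub_mulVec, dotProduct_sub, hskew, sub_zero] at h1
    rw [h1]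
    simp only [dotProduct, Finset.mul_sum]
    exact Finset.sum_congr rfl (fun i _ => by ring)
  have hEven : Even (t ⬝ᵥ w) := by
    -- pass to ZMod 2
    have hcast : ((t ⬝ᵥ w : ℤ) : ZMod 2) = 0 := by
      have hq2 : ((w ⬝ᵥ (K *ᵥ w) : ℤ) : ZMod 2)
          = (fun i => ((w i : ℤ) : ZMod 2)) ⬝ᵥ
            ((K.map (Int.cast : ℤ → ZMod 2)) *ᵥ (fun i => ((w i : ℤ) : ZMod 2))) := by
        simp only [dotProduct, Matrix.mulVec, Matrix.map_apply]
        push_cast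
        rfl
      have hsymm2 : (K.map (Int.cast : ℤ → ZMod 2)).IsSymm := by
        rw [Matrix.IsSymm]
        ext i j
        simp [Matrix.map_apply, Matrix.transpose_apply, hK.apply i j]
      have hquad2 := quad_diag_char2 (K.map (Int.cast : ℤ → ZMod 2)) hsymm2
          (fun i => ((w i : ℤ) : ZMod 2))
      have hdiag2 : ∑ i, (K.map (Int.cast : ℤ → ZMod 2)) i i * ((w i : ℤ) : ZMod 2)
          = ((t ⬝ᵥ w : ℤ) : ZMod 2) := by
        rw [show ((t ⬝ᵥ w : ℤ) : ZMod 2) = ∑ i, ((t i : ZMod 2)) * ((w i : ZMod 2)) by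
          simp only [dotProduct]; push_cast; rfl]
        refine Finset.sum_congr rfl ?_
        intro i _
        have hpi : ((K i i : ℤ) : ZMod 2) = ((t i : ℤ) : ZMod 2) := by
          have := hpar i
          exact_mod_cast (ZMod.intCast_eq_intCast_iff _ _ 2).mpr (by exact_mod_cast this)
        simp [Matrix.map_apply, hpi]
      have hdeven2 : ((d : ℤ) : ZMod 2) = 0 := by
        obtain ⟨c, hc⟩ := hdeven
        rw [hc]
        push_cast
        exact (by decide : ∀ x : ZMod 2, x + x = 0) _
      have : ((w ⬝ᵥ (K *ᵥ w) : ℤ) : ZMod 2) = ((t ⬝ᵥ w : ℤ) : ZMod 2) := by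
        rw [hq2, hquad2, hdiag2]
      rw [hquadInt] at this
      have hz : ((d * (w ⬝ᵥ t) : ℤ) : ZMod 2) = 0 := by
        push_cast
        rw [hdeven2, zero_mul]
      rw [hz] at this
      exact this.symm
    rw [ZMod.intCast_zmod_eq_zero_iff_dvd] at hcast
    exact (even_iff_two_dvd).mpr (by exact_mod_cast hcast)
  obtain ⟨c, hc⟩ := hEven
  refine ⟨-c, ?_⟩
  -- compute d * (χ ⬝ᵥ q)
  have hchi : χ ⬝ᵥ (𝒦⁻¹ *ᵥ τ) = -(t' ⬝ᵥ u) := by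
    rw [hq]
    show Sum.elim 0 t' ⬝ᵥ Sum.elim u (-u) = _
    rw [sumElim_dotProduct_sumElim, zero_dotProduct, zero_add,
      dotProduct_neg]
  have hdu : (d:ℚ) • u = fun i => (w i : ℚ) := by
    funext i; rw [Pi.smul_apply, smul_eq_mul, hw i]
  have hfin : (d:ℚ) * (t' ⬝ᵥ u) = ((t ⬝ᵥ w : ℤ) : ℚ) := by
    calc (d:ℚ) * (t' ⬝ᵥ u) = t' ⬝ᵥ ((d:ℚ) • u) := by
          rw [dotProduct_smul, smul_eq_mul]
      _ = t' ⬝ᵥ (fun i => (w i : ℚ)) := by rw [hdu]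
      _ = ((t ⬝ᵥ w : ℤ) : ℚ) := by
          simp only [dotProduct, ht']
          push_cast
          rfl
  rw [hchi, mul_neg, hfin, hc]
  push_cast
  ring
end

section
/- Let m ≥ 1, let K be a symmetric m×m integer matrix, W a skew-symmetric m×m integer matrix, and t ∈ ℤ^m a vector with K_{ii} ≡ t_i (mod 2) for every index i. If d is an even positive integer and Λ ∈ ℤ^m satisfies (K − W)·Λ = d·t, then the integer tᵀΛ is even. -/
open Matrix Finset

private lemma even_offDiag_sum {m : ℕ} (f : Fin m → Fin m → ℤ)
    (hf : ∀ i j, f i j = f j i) :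
    Even (∑ p ∈ (univ : Finset (Fin m)).offDiag, f p.1 p.2) := by
  classical
  have hsplit := Finset.sum_filter_add_sum_filter_not
    ((univ : Finset (Fin m)).offDiag) (fun p => p.1 < p.2) (fun p => f p.1 p.2)
  have hbij : ∑ p ∈ (univ : Finset (Fin m)).offDiag.filter (fun p => ¬ p.1 < p.2),
      f p.1 p.2 = ∑ p ∈ (univ : Finset (Fin m)).offDiag.filter (fun p => p.1 < p.2),
      f p.1 p.2 := by
    apply Finset.sum_nbij' (fun p => Prod.swap p) (fun p => Prod.swap p)
    · intro p hp
      simp only [Finset.mem_filter, Finset.mem_offDiag] at hp ⊢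
      obtain ⟨⟨_, _, hne⟩, hnlt⟩ := hp
      exact ⟨⟨by simp, by simp, Ne.symm hne⟩, lt_of_le_of_ne (not_lt.mp hnlt) (Ne.symm hne)⟩
    · intro p hp
      simp only [Finset.mem_filter, Finset.mem_offDiag] at hp ⊢
      obtain ⟨⟨_, _, hne⟩, hlt⟩ := hp
      exact ⟨⟨by simp, by simp, Ne.symm hne⟩, not_lt.mpr hlt.le⟩
    · intro p _; simp
    · intro p _; simp
    · intro p _; exact hf p.1 p.2
  refine ⟨∑ p ∈ (univ : Finset (Fin m)).offDiag.filter (fun p => p.1 < p.2),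
    f p.1 p.2, ?_⟩
  omega

/-- Let `K` be a symmetric `m × m` integer matrix, `W` skew-symmetric,
and `t` an integer vector with `K i i ≡ t i (mod 2)`. If `d` is an even positive integer
and `Λ` is an integer vector with `(K - W) Λ = d • t`, then `tᵀ Λ` is even. -/
theorem charge_even_of_even_d (m : ℕ) (hm : 1 ≤ m)
    (K W : Matrix (Fin m) (Fin m) ℤ)
    (hK : K.IsSymm) (hW : Wᵀ = -W)
    (t : Fin m → ℤ) (hpar : ∀ i, K i i ≡ t i [ZMOD 2])
    (d : ℤ) (hd : 0 < d) (hde : Even d)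
    (Λ : Fin m → ℤ) (hΛ : (K - W) *ᵥ Λ = d • t) :
    Even (t ⬝ᵥ Λ) := by
  classical
  -- Step 1: skew part vanishes
  have hWΛ : Λ ⬝ᵥ (W *ᵥ Λ) = 0 := by
    have h1 : Λ ⬝ᵥ (W *ᵥ Λ) = (Λ ᵥ* W) ⬝ᵥ Λ := Matrix.dotProduct_mulVec Λ W Λ
    have h2 : Λ ᵥ* W = Wᵀ *ᵥ Λ := (Matrix.mulVec_transpose W Λ).symm
    rw [h2, hW] at h1
    have h3 : ((-W) *ᵥ Λ) ⬝ᵥ Λ = -(Λ ⬝ᵥ (W *ᵥ Λ)) := by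
      rw [Matrix.neg_mulVec, dotProduct_comm]
      simp [dotProduct_neg]
    rw [h3] at h1
    linarith
  -- Step 2: Λᵀ K Λ = d * (t ⬝ᵥ Λ)
  have hKΛ : Λ ⬝ᵥ (K *ᵥ Λ) = d * (t ⬝ᵥ Λ) := by
    have := congrArg (fun v => Λ ⬝ᵥ v) hΛ
    simp only [Matrix.sub_mulVec, dotProduct_sub, hWΛ, sub_zero,
      dotProduct_smul, smul_eq_mul] at this
    rw [dotProduct_comm t Λ]
    exact this
  -- hence Λᵀ K Λ is even
  have hEvenKΛ : Even (Λ ⬝ᵥ (K *ᵥ Λ)) := hKΛ ▸ hde.mul_right _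
  -- Step 3: Λᵀ K Λ ≡ ∑ K i i * Λ i (mod 2)
  set f : Fin m → Fin m → ℤ := fun i j => Λ i * (K i j * Λ j) with hfdef
  have hfsymm : ∀ i j, f i j = f j i := by
    intro i j
    have : K i j = K j i := by
      have := congrFun (congrFun hK j) i
      simpa [Matrix.transpose_apply] using this
    simp [hfdef, this]; ring
  have hsum : Λ ⬝ᵥ (K *ᵥ Λ) = ∑ p ∈ (univ : Finset (Fin m)) ×ˢ univ, f p.1 p.2 := by
    rw [Finset.sum_product]
    simp [dotProduct, Matrix.mulVec, hfdef, Finset.mul_sum]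
  have hdecomp : Λ ⬝ᵥ (K *ᵥ Λ)
      = (∑ i, f i i) + ∑ p ∈ (univ : Finset (Fin m)).offDiag, f p.1 p.2 := by
    rw [hsum, ← Finset.diag_union_offDiag (univ : Finset (Fin m)),
      Finset.sum_union (Finset.disjoint_diag_offDiag _), Finset.sum_diag]
  have hoff := even_offDiag_sum f hfsymm
  have hEvenDiag : Even (∑ i, f i i) := by
    rcases hEvenKΛ with ⟨a, ha⟩
    rcases hoff with ⟨b, hb⟩
    exact ⟨a - b, by rw [hdecomp] at ha; omega⟩
  -- Step 4: diagonal sum ≡ t ⬝ᵥ Λ (mod 2)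
  have hpt : ∀ i : Fin m, f i i ≡ t i * Λ i [ZMOD 2] := by
    intro i
    have hxx : Λ i * Λ i ≡ Λ i [ZMOD 2] := by
      unfold Int.ModEq
      rw [Int.mul_emod]
      have := Int.emod_two_eq (Λ i)
      rcases this with h | h <;> rw [h] <;> norm_num
    calc Λ i * (K i i * Λ i) = K i i * (Λ i * Λ i) := by ring
      _ ≡ t i * Λ i [ZMOD 2] := (hpar i).mul hxx
  have hdiagcong : (((∑ i, f i i) : ℤ) : ZMod 2) = ((t ⬝ᵥ Λ : ℤ) : ZMod 2) := by
    unfold dotProduct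
    push_cast
    apply Finset.sum_congr rfl
    intro i _
    exact_mod_cast (ZMod.intCast_eq_intCast_iff _ _ _).mpr (hpt i)
  have h0 : (((∑ i, f i i) : ℤ) : ZMod 2) = 0 := by
    rcases hEvenDiag with ⟨a, ha⟩
    exact (ZMod.intCast_zmod_eq_zero_iff_dvd _ 2).mpr ⟨a, by omega⟩
  rw [h0] at hdiagcong
  have : (2 : ℤ) ∣ t ⬝ᵥ Λ := by
    exact_mod_cast (ZMod.intCast_zmod_eq_zero_iff_dvd _ 2).mp hdiagcong.symm
  rcases this with ⟨c, hc⟩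
  exact ⟨c, by omega⟩
end

section
/- Let K be a symmetric m×m rational matrix, W a skew-symmetric m×m rational matrix with K − W invertible, and t ∈ ℚ^m. Then the 2m×2m block matrix 𝒦 = [[K, W], [Wᵀ, −K]] is invertible, and with u = (K − W)⁻¹t one has 𝒦·(u, −u) = (t, t). Consequently, for τ = (t, t) and χ = (0, t): (i) {lᵀ𝒦⁻¹τ : l ∈ ℤ^{2m}} = {vᵀ(K − W)⁻¹t : v ∈ ℤ^m} when t ∈ ℤ^m, and (ii) χᵀ𝒦⁻¹τ = −tᵀ(K − W)⁻¹t. -/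
open Matrix

private lemma sum_elim_dot {m : ℕ} (a b c d : Fin m → ℚ) :
    Sum.elim a b ⬝ᵥ Sum.elim c d = a ⬝ᵥ c + b ⬝ᵥ d := by
  simp [dotProduct, Fintype.sum_sum_type]

/-- For `K` symmetric, `W` skew-symmetric rational matrices with `K - W`
invertible, and `t ∈ ℚᵐ`, the block matrix `𝒦 = [[K, W], [Wᵀ, -K]]` is invertible and,
with `u = (K - W)⁻¹ t`, `𝒦 (u, -u) = (t, t)`.  Consequently, for `τ = (t, t)` and
`χ = (0, t)`: (i) `{lᵀ 𝒦⁻¹ τ : l ∈ ℤ^{2m}} = {vᵀ (K - W)⁻¹ t : v ∈ ℤᵐ}` when `t` is an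
integer vector, and (ii) `χᵀ 𝒦⁻¹ τ = - tᵀ (K - W)⁻¹ t`. -/
theorem spinHall_reduction (m : ℕ) (hm : 1 ≤ m)
    (K W : Matrix (Fin m) (Fin m) ℚ)
    (hK : K.IsSymm) (hW : Wᵀ = -W)
    (hKW : IsUnit (K - W).det)
    (t : Fin m → ℚ) :
    let 𝒦 : Matrix (Fin m ⊕ Fin m) (Fin m ⊕ Fin m) ℚ := Matrix.fromBlocks K W Wᵀ (-K)
    let τ : Fin m ⊕ Fin m → ℚ := Sum.elim t t
    let χ : Fin m ⊕ Fin m → ℚ := Sum.elim 0 t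
    let u : Fin m → ℚ := (K - W)⁻¹ *ᵥ t
    IsUnit 𝒦.det ∧
    𝒦 *ᵥ (Sum.elim u (-u)) = Sum.elim t t ∧
    ((∀ i, ∃ z : ℤ, t i = (z : ℚ)) →
      {x : ℚ | ∃ l : Fin m ⊕ Fin m → ℤ, x = (fun i => (l i : ℚ)) ⬝ᵥ (𝒦⁻¹ *ᵥ τ)} =
        {x : ℚ | ∃ v : Fin m → ℤ, x = (fun i => (v i : ℚ)) ⬝ᵥ ((K - W)⁻¹ *ᵥ t)}) ∧
    χ ⬝ᵥ (𝒦⁻¹ *ᵥ τ) = -(t ⬝ᵥ ((K - W)⁻¹ *ᵥ t)) := by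
  set 𝒦 : Matrix (Fin m ⊕ Fin m) (Fin m ⊕ Fin m) ℚ := Matrix.fromBlocks K W Wᵀ (-K) with h𝒦
  set τ : Fin m ⊕ Fin m → ℚ := Sum.elim t t with hτ
  set χ : Fin m ⊕ Fin m → ℚ := Sum.elim 0 t with hχ
  set u : Fin m → ℚ := (K - W)⁻¹ *ᵥ t with hu
  -- K + W is the transpose of K - W, hence also invertible
  have htr : (K - W)ᵀ = K + W := by
    rw [transpose_sub, hK.eq, hW, sub_neg_eq_add]
  have hKW2 : IsUnit (K + W).det := by
    rw [← htr, det_transpose]; exact hKW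
  set P := (K - W)⁻¹ with hPdef
  set Q := (K + W)⁻¹ with hQdef
  have hP : (K - W) * P = 1 := mul_nonsing_inv _ hKW
  have hQ : (K + W) * Q = 1 := mul_nonsing_inv _ hKW2
  -- explicit right inverse of 𝒦
  have e11 : K * (P + Q) + W * (Q - P) = (K - W) * P + (K + W) * Q := by
    noncomm_ring
  have e12 : K * (P - Q) + W * (-(P + Q)) = (K - W) * P - (K + W) * Q := by
    noncomm_ring
  have e21 : Wᵀ * (P + Q) + (-K) * (Q - P) = (K - W) * P - (K + W) * Q := by
    rw [hW]; noncomm_ring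
  have e22 : Wᵀ * (P - Q) + (-K) * (-(P + Q)) = (K - W) * P + (K + W) * Q := by
    rw [hW]; noncomm_ring
  have key : 𝒦 * Matrix.fromBlocks (P + Q) (P - Q) (Q - P) (-(P + Q)) =
      (2 : ℚ) • (1 : Matrix (Fin m ⊕ Fin m) (Fin m ⊕ Fin m) ℚ) := by
    rw [h𝒦, Matrix.fromBlocks_multiply, e11, e12, e21, e22, hP, hQ]
    ext i j
    rcases i with i | i <;> rcases j with j | j <;>
      simp [Matrix.one_apply, Matrix.add_apply] <;> split <;> norm_num
  have hB : 𝒦 * ((2 : ℚ)⁻¹ • Matrix.fromBlocks (P + Q) (P - Q) (Q - P) (-(P + Q))) = 1 := by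
    rw [Matrix.mul_smul, key, smul_smul]
    norm_num
  have hDet : IsUnit 𝒦.det := Matrix.isUnit_det_of_right_inverse hB
  -- the mulVec identity
  have hKWu : (K - W) *ᵥ u = t := by
    rw [hu, mulVec_mulVec, hP, one_mulVec]
  have hmul : 𝒦 *ᵥ (Sum.elim u (-u)) = Sum.elim t t := by
    rw [h𝒦, Matrix.fromBlocks_mulVec]
    have hl : (Sum.elim u (-u) : Fin m ⊕ Fin m → ℚ) ∘ Sum.inl = u := rfl
    have hr : (Sum.elim u (-u) : Fin m ⊕ Fin m → ℚ) ∘ Sum.inr = -u := rfl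
    have h1 : K *ᵥ u + W *ᵥ (-u) = t := by
      rw [mulVec_neg, ← sub_eq_add_neg, ← sub_mulVec, hKWu]
    have h2 : Wᵀ *ᵥ u + (-K) *ᵥ (-u) = t := by
      simp only [hW, neg_mulVec, mulVec_neg, neg_neg]
      rw [neg_add_eq_sub, ← sub_mulVec, hKWu]
    rw [hl, hr, h1, h2]
  have hinv : 𝒦⁻¹ *ᵥ τ = Sum.elim u (-u) := by
    rw [hτ, ← hmul, mulVec_mulVec, nonsing_inv_mul _ hDet, one_mulVec]
  refine ⟨hDet, hmul, ?_, ?_⟩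
  · intro _
    ext x
    simp only [Set.mem_setOf_eq, hinv]
    constructor
    · rintro ⟨l, hl⟩
      refine ⟨fun i => l (Sum.inl i) - l (Sum.inr i), ?_⟩
      have : (fun i => (l i : ℚ)) =
          Sum.elim (fun i => (l (Sum.inl i) : ℚ)) (fun i => (l (Sum.inr i) : ℚ)) := by
        funext i; cases i <;> rfl
      rw [hl, this, sum_elim_dot]
      push_cast
      simp [dotProduct, sub_mul, add_mul, neg_mul, Finset.sum_add_distrib,
        Finset.sum_neg_distrib, sub_eq_add_neg, hu]
    · rintro ⟨v, hv⟩
      refine ⟨Sum.elim v (0 : Fin m → ℤ), ?_⟩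
      have : (fun i => ((Sum.elim v (0 : Fin m → ℤ) i : ℤ) : ℚ)) =
          Sum.elim (fun i => (v i : ℚ)) (fun _ : Fin m => (0 : ℚ)) := by
        funext i; cases i <;> simp
      rw [hv, this, sum_elim_dot]
      simp [hu]
  · rw [hinv, hχ, sum_elim_dot]
    simp [dotProduct_neg, hu]
end

section
/- Let N ≥ 1, let K be a symmetric 2N×2N integer matrix with det K ≠ 0, and let Λ_1, …, Λ_N ∈ ℤ^{2N} be linearly independent over ℚ and satisfy the null vector condition Λ_iᵀ K Λ_j = 0 for all i, j. Let Γ = {p ∈ ℤ^{2N} : Λ_iᵀ K p = 0 for all i} and let A be the subgroup of ℤ^{2N} generated by Λ_1, …, Λ_N. Then A ⊆ Γ, the index [Γ : A] is finite, and [Γ : A] equals the greatest common divisor of the absolute values of the N×N minors of the 2N×N integer matrix M whose columns are Λ_1, …, Λ_N. -/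
open Matrix

lemma det_mul_expand {n m : Type*} [Fintype n] [Fintype m] [DecidableEq n] [DecidableEq m]
    (A : Matrix n m ℤ) (B : Matrix m n ℤ) :
    (A * B).det = ∑ g : n → m, (A.submatrix id g).det * ∏ i, B (g i) i := by
  simp only [Matrix.det_apply, Matrix.mul_apply]
  have h1 : ∀ σ : Equiv.Perm n,
      (∏ i, ∑ j, A (σ i) j * B j i) =
        ∑ g : n → m, ∏ i, A (σ i) (g i) * B (g i) i := by
    intro σ
    rw [Finset.prod_univ_sum]
    refine Finset.sum_congr ?_ (fun g _ => rfl)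
    simp [Fintype.piFinset_univ]
  simp only [h1, Finset.smul_sum]
  rw [Finset.sum_comm]
  refine Finset.sum_congr rfl fun g _ => ?_
  rw [Finset.sum_mul]
  refine Finset.sum_congr rfl fun σ _ => ?_
  rw [Finset.prod_mul_distrib]
  simp only [Matrix.submatrix_apply, id_eq]
  rw [smul_mul_assoc]

lemma dvd_det_mul {n m : Type*} [Fintype n] [Fintype m] [DecidableEq n] [DecidableEq m]
    (A : Matrix n m ℤ) (B : Matrix m n ℤ) (d : ℤ)
    (h : ∀ g : n ↪ m, d ∣ (A.submatrix id g).det) : d ∣ (A * B).det := by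
  rw [det_mul_expand]
  refine Finset.dvd_sum fun g _ => ?_
  by_cases hg : Function.Injective g
  · exact dvd_mul_of_dvd_left (h ⟨g, hg⟩) _
  · rw [Function.not_injective_iff] at hg
    obtain ⟨i, j, hij, hne⟩ := hg
    rw [Matrix.det_zero_of_column_eq hne (fun k => by simp [hij]), zero_mul]
    exact dvd_zero d


/-- The lattice `Γ` of low-energy sectors: integer vectors `p` with `Λᵢᵀ K p = 0` for all
gapping vectors `Λᵢ`. -/
def sectorLattice {n κ : Type*} [Fintype n] (K : Matrix n n ℤ) (Λ : κ → n → ℤ) :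
    AddSubgroup (n → ℤ) where
  carrier := {p | ∀ i, Λ i ⬝ᵥ (K *ᵥ p) = 0}
  zero_mem' := by
    intro i
    simp [Matrix.mulVec_zero]
  add_mem' := by
    intro a b ha hb i
    rw [Matrix.mulVec_add, dotProduct_add, ha i, hb i, add_zero]
  neg_mem' := by
    intro a ha i
    rw [Matrix.mulVec_neg, dotProduct_neg, ha i, neg_zero]

/-- The greatest common divisor of the absolute values of the maximal minors of an integer
matrix `M`, i.e. of the determinants of the square submatrices obtained by selecting rows
of `M` via an embedding of the column index type into the row index type. -/
noncomputable def minorGcd {R C : Type*} [Fintype R] [Fintype C] [DecidableEq R]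
    [DecidableEq C] (M : Matrix R C ℤ) : ℕ :=
  Finset.univ.gcd fun f : C ↪ R => ((M.submatrix f id).det).natAbs

/-- (Ground state degeneracy of a gapped edge on a disk.) Let `K` be a
symmetric nonsingular `2N × 2N` integer matrix and `Λ₁, …, Λ_N ∈ ℤ^{2N}` linearly
independent over `ℚ`, satisfying the null vector condition `Λᵢᵀ K Λⱼ = 0`.  With
`Γ = {p ∈ ℤ^{2N} : Λᵢᵀ K p = 0 ∀ i}` and `A` the subgroup generated by the `Λᵢ`, one has
`A ⊆ Γ`, the index `[Γ : A]` is finite, and it equals the gcd of the absolute values of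
the `N × N` minors of the matrix with columns `Λ₁, …, Λ_N`. -/
theorem disk_ground_state_degeneracy (N : ℕ) (hN : 1 ≤ N)
    (K : Matrix (Fin (2 * N)) (Fin (2 * N)) ℤ) (hK : K.IsSymm) (hdet : K.det ≠ 0)
    (Λ : Fin N → Fin (2 * N) → ℤ)
    (hind : LinearIndependent ℚ (fun i => fun j => (Λ i j : ℚ)))
    (hnull : ∀ i j, Λ i ⬝ᵥ (K *ᵥ Λ j) = 0) :
    AddSubgroup.closure (Set.range Λ) ≤ sectorLattice K Λ ∧
    (AddSubgroup.closure (Set.range Λ)).relIndex (sectorLattice K Λ) ≠ 0 ∧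
    (AddSubgroup.closure (Set.range Λ)).relIndex (sectorLattice K Λ) =
      minorGcd (Matrix.of fun r c => Λ c r) := by
  classical
  have hΛmem : ∀ j, Λ j ∈ sectorLattice K Λ := fun j i => hnull i j
  have part1 : AddSubgroup.closure (Set.range Λ) ≤ sectorLattice K Λ := by
    rw [AddSubgroup.closure_le]
    rintro x ⟨j, rfl⟩
    exact hΛmem j
  set φ : (Fin (2*N) → ℤ) →ₗ[ℤ] (Fin N → ℤ) := ((Matrix.of Λ) * K).mulVecLin with hφdef
  set Γ' : Submodule ℤ (Fin (2*N) → ℤ) := LinearMap.ker φ with hΓdef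
  set A' : Submodule ℤ (Fin (2*N) → ℤ) := Submodule.span ℤ (Set.range Λ) with hAdef
  have hmemΓ : ∀ p, p ∈ Γ' ↔ ∀ i, Λ i ⬝ᵥ (K *ᵥ p) = 0 := by
    intro p
    rw [hΓdef, LinearMap.mem_ker, hφdef, Matrix.mulVecLin_apply, ← Matrix.mulVec_mulVec,
      funext_iff]
    exact Iff.rfl
  have hΓeq : Γ'.toAddSubgroup = sectorLattice K Λ := by
    ext p
    exact hmemΓ p
  have hAeq : A'.toAddSubgroup = AddSubgroup.closure (Set.range Λ) :=
    Submodule.span_int_eq_addSubgroupClosure _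
  have hΛΓ : ∀ j, Λ j ∈ Γ' := fun j => (hmemΓ _).mpr (fun i => hnull i j)
  have hAΓ : A' ≤ Γ' := Submodule.span_le.mpr (by rintro x ⟨j, rfl⟩; exact hΛΓ j)
  -- the integer-to-rational cast map
  let c2 : (Fin (2*N) → ℤ) →ₗ[ℤ] (Fin (2*N) → ℚ) :=
    { toFun := fun v r => (v r : ℚ)
      map_add' := fun x y => by funext r; simp
      map_smul' := fun c x => by funext r; simp }
  have hc2inj : Function.Injective c2 := by
    intro x y h
    funext r
    have h2 : ((x r : ℚ)) = ((y r : ℚ)) := congrFun h r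
    exact_mod_cast h2
  have hc2ker : LinearMap.ker c2 = ⊥ := LinearMap.ker_eq_bot.mpr hc2inj
  have hindZ : LinearIndependent ℤ Λ := by
    have h0 : LinearIndependent ℤ (fun i => fun j => (Λ i j : ℚ)) :=
      hind.restrict_scalars (by
        intro x y h
        simpa [zsmul_eq_mul] using h)
    exact LinearIndependent.of_comp c2 h0
  -- rational side
  let f0 : ℤ →+* ℚ := Int.castRingHom ℚ
  let Mq : Matrix (Fin N) (Fin (2*N)) ℚ := (Matrix.of Λ).map f0
  let Kq : Matrix (Fin (2*N)) (Fin (2*N)) ℚ := K.map f0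
  set φq : (Fin (2*N) → ℚ) →ₗ[ℚ] (Fin N → ℚ) := (Mq * Kq).mulVecLin with hφqdef
  have hcast : ∀ p, φq (c2 p) = fun i => ((φ p i : ℤ) : ℚ) := by
    intro p
    funext i
    rw [hφqdef, Matrix.mulVecLin_apply]
    have h1 : (Mq * Kq) = ((Matrix.of Λ) * K).map f0 := (Matrix.map_mul).symm
    rw [h1]
    exact (RingHom.map_mulVec f0 _ p i).symm
  set W : Submodule ℚ (Fin (2*N) → ℚ) :=
    Submodule.span ℚ (Set.range fun i => fun j => ((Λ i j : ℚ))) with hWdef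
  have hKqdet : IsUnit Kq.det := by
    have : Kq.det = ((K.det : ℤ) : ℚ) := (RingHom.map_det f0 K).symm
    rw [this]
    exact isUnit_iff_ne_zero.mpr (by exact_mod_cast hdet)
  have hrk : (Mq * Kq).rank = N := by
    rw [Matrix.rank_mul_eq_left_of_isUnit_det Kq Mq hKqdet]
    have h2 : LinearIndependent ℚ Mq.row := hind
    rw [h2.rank_matrix]
    simp
  have hkerdim : Module.finrank ℚ (LinearMap.ker φq) = N := by
    have h1 := LinearMap.finrank_range_add_finrank_ker φq
    rw [Module.finrank_fintype_fun_eq_card] at h1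
    have h2 : Module.finrank ℚ (LinearMap.range φq) = N := hrk
    simp only [Fintype.card_fin] at h1
    omega
  have hWle : W ≤ LinearMap.ker φq := by
    rw [hWdef, Submodule.span_le]
    rintro x ⟨i0, rfl⟩
    rw [SetLike.mem_coe, LinearMap.mem_ker]
    show φq (c2 (Λ i0)) = 0
    rw [hcast]
    have h4 : φ (Λ i0) = 0 := hΛΓ i0
    rw [h4]
    funext i
    simp
  have hWrank : Module.finrank ℚ W = N := by
    rw [hWdef, finrank_span_eq_card hind]
    simp
  have hWeq : W = LinearMap.ker φq :=
    Submodule.eq_of_le_of_finrank_le hWle (by rw [hkerdim, hWrank])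
  have hΓW : ∀ p ∈ Γ', c2 p ∈ W := by
    intro p hp
    rw [hWeq, LinearMap.mem_ker, hcast]
    have h5 : φ p = 0 := hp
    rw [h5]
    funext i
    simp
  -- Smith normal form of A' ≤ Γ'
  obtain ⟨o, n, bΓ, bA'', f, a, hsnf⟩ :=
    Submodule.smithNormalFormOfLE (Pi.basisFun ℤ (Fin (2*N))) A' Γ' hAΓ
  let e : ↥(A'.comap Γ'.subtype) ≃ₗ[ℤ] ↥A' := Submodule.comapSubtypeEquivOfLe hAΓ
  let bA : Module.Basis (Fin n) ℤ ↥A' := bA''.map e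
  let bΛ : Module.Basis (Fin N) ℤ ↥A' := Module.Basis.span hindZ
  have hn : n = N := by
    simpa using Fintype.card_congr (bA.indexEquiv bΛ)
  have hoN : o = N := by
    have h1 : LinearIndependent ℤ (fun i => ((bΓ i : ↥Γ') : Fin (2*N) → ℤ)) :=
      bΓ.linearIndependent.map' Γ'.subtype (Submodule.ker_subtype _)
    have h2 : LinearIndependent ℤ (fun i => c2 ((bΓ i : ↥Γ') : Fin (2*N) → ℤ)) :=
      h1.map' c2 hc2ker
    have h3 : LinearIndependent ℚ (fun i => c2 ((bΓ i : ↥Γ') : Fin (2*N) → ℤ)) :=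
      (LinearIndependent.iff_fractionRing ℤ ℚ).mp h2
    have hmemW : ∀ i, c2 ((bΓ i : ↥Γ') : Fin (2*N) → ℤ) ∈ W := fun i => hΓW _ (bΓ i).2
    have h4 : LinearIndependent ℚ (fun i => (⟨c2 ((bΓ i : ↥Γ') : _), hmemW i⟩ : ↥W)) := by
      apply LinearIndependent.of_comp W.subtype
      exact h3
    have h5 := h4.fintype_card_le_finrank
    rw [hWrank] at h5
    simp only [Fintype.card_fin] at h5
    have h6 : n ≤ o := by
      simpa using Fintype.card_le_of_embedding f
    omega
  subst hn
  subst hoN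
  -- index computation
  have hidx : (A'.comap Γ'.subtype).toAddSubgroup.index = ∏ i, (a i).natAbs := by
    have h1 := Module.Basis.SmithNormalForm.toAddSubgroup_index_eq_pow_mul_prod
      (N := A'.comap Γ'.subtype) ⟨bΓ, bA'', f, a, hsnf⟩
    rw [h1]
    simp [Int.index_zmultiples]
  have haneq : ∀ i, a i ≠ 0 := by
    intro i hai
    apply bA''.ne_zero i
    have h1 := hsnf i
    rw [hai, zero_smul] at h1
    exact Subtype.ext h1
  have hrel : (AddSubgroup.closure (Set.range Λ)).relIndex (sectorLattice K Λ)
      = ∏ i, (a i).natAbs := by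
    rw [← hAeq, ← hΓeq, ← hidx]
    rfl
  refine ⟨part1, ?_, ?_⟩
  · rw [hrel]
    exact Finset.prod_ne_zero_iff.mpr fun i _ => Int.natAbs_ne_zero.mpr (haneq i)
  rw [hrel]
  -- matrices
  set P : Matrix (Fin (2*o)) (Fin o) ℤ :=
    Matrix.of fun r i => ((bΓ i : Fin (2*o) → ℤ)) r with hPdef
  set D : Matrix (Fin o) (Fin o) ℤ :=
    Matrix.of fun k i => if k = f i then a i else 0 with hDdef
  set U : Matrix (Fin o) (Fin o) ℤ := bA.toMatrix bΛ with hUdef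
  have hbAcoe : ∀ i, ((bA i : Fin (2*o) → ℤ)) = a i • ((bΓ (f i) : Fin (2*o) → ℤ)) := by
    intro i
    have h1 : ((bA i : Fin (2*o) → ℤ)) = (((bA'' i : ↥Γ') : Fin (2*o) → ℤ)) := rfl
    rw [h1, hsnf i]
    rfl
  have hfbij : Function.Bijective f := Finite.injective_iff_bijective.mp f.injective
  set σ : Equiv.Perm (Fin o) := Equiv.ofBijective f hfbij with hσdef
  have hPD : ∀ r i, (P * D) r i = P r (f i) * a i := by
    intro r i
    rw [Matrix.mul_apply]
    have h1 : ∀ k, P r k * D k i = if k = f i then P r k * a i else 0 := by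
      intro k
      rw [hDdef]
      simp only [Matrix.of_apply, mul_ite, mul_zero]
    simp only [h1, Finset.sum_ite_eq', Finset.mem_univ, if_true]
  have hM : (Matrix.of fun r c => Λ c r) = P * D * U := by
    ext r j
    have h1 : Λ j = ((bΛ j : Fin (2*o) → ℤ)) := congrArg Subtype.val (Module.Basis.span_apply hindZ j).symm
    have h2 := bA.sum_repr (bΛ j)
    calc (Matrix.of fun r c => Λ c r) r j = Λ j r := rfl
      _ = ((bΛ j : Fin (2*o) → ℤ)) r := by rw [← h1]
      _ = (((∑ i, bA.repr (bΛ j) i • bA i : ↥A') : Fin (2*o) → ℤ)) r := by rw [h2]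
      _ = ∑ i, bA.repr (bΛ j) i * ((bA i : Fin (2*o) → ℤ)) r := by
          rw [Submodule.coe_sum]
          simp [Finset.sum_apply]
      _ = ∑ i, (P * D) r i * U i j := by
          refine Finset.sum_congr rfl fun i _ => ?_
          rw [hPD r i, hbAcoe i, hUdef]
          simp only [Module.Basis.toMatrix_apply, Pi.smul_apply, smul_eq_mul, hPdef, Matrix.of_apply]
          ring
      _ = (P * D * U) r j := (Matrix.mul_apply).symm
  have hdetD : D.det.natAbs = ∏ i, (a i).natAbs := by
    have hDeq : D = fun k => (Matrix.diagonal a) (σ.symm k) := by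
      ext k i
      rw [hDdef]
      simp only [Matrix.of_apply]
      rcases eq_or_ne k (f i) with h | h
      · have h2 : σ.symm k = i := by
          rw [h]
          exact σ.symm_apply_apply i
        rw [if_pos h, h2]
        simp [Matrix.diagonal]
      · have h2 : σ.symm k ≠ i := by
          intro hc
          apply h
          rw [← hc]
          exact (σ.apply_symm_apply k).symm
        rw [if_neg h]
        simp [Matrix.diagonal, h2]
    have h3 : D.det = (Equiv.Perm.sign σ.symm : ℤ) * (Matrix.diagonal a).det := by
      rw [hDeq]
      exact Matrix.det_permute σ.symm (Matrix.diagonal a)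
    rw [h3, Int.natAbs_mul, Int.units_natAbs, one_mul, Matrix.det_diagonal]
    exact map_prod Int.natAbsHom a Finset.univ
  have hUnat : U.det.natAbs = 1 := by
    have hUdet2 : U.det * (bΛ.toMatrix bA).det = 1 := by
      rw [← Matrix.det_mul, Module.Basis.toMatrix_mul_toMatrix_flip, Matrix.det_one]
    exact Int.isUnit_iff_natAbs_eq.mp (IsUnit.of_mul_eq_one _ hUdet2)
  have hminor : ∀ g : Fin o ↪ Fin (2*o),
      (((Matrix.of fun r c => Λ c r).submatrix g id).det).natAbs
        = (∏ i, (a i).natAbs) * ((P.submatrix g id).det).natAbs := by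
    intro g
    rw [hM]
    rw [Matrix.submatrix_mul (P * D) U g id id Function.bijective_id,
      Matrix.submatrix_mul P D g id id Function.bijective_id,
      Matrix.submatrix_id_id, Matrix.submatrix_id_id,
      Matrix.det_mul, Matrix.det_mul, Int.natAbs_mul, Int.natAbs_mul, hdetD, hUnat, mul_one]
    ring
  have hgcdM : minorGcd (Matrix.of fun r c => Λ c r) = (∏ i, (a i).natAbs) * minorGcd P := by
    unfold minorGcd
    rw [Finset.gcd_congr rfl fun g _ => hminor g]
    rw [Finset.gcd_mul_left]
    simp
  -- left inverse of P
  have hfree : Module.Free ℤ ((Fin (2*o) → ℤ) ⧸ Γ') := by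
    have e2 : ((Fin (2*o) → ℤ) ⧸ LinearMap.ker φ) ≃ₗ[ℤ] LinearMap.range φ :=
      φ.quotKerEquivRange
    rw [hΓdef]
    exact Module.Free.of_equiv e2.symm
  obtain ⟨sec, hsec⟩ := Module.projective_lifting_property Γ'.mkQ LinearMap.id
    (Submodule.mkQ_surjective Γ')
  set π0 : (Fin (2*o) → ℤ) →ₗ[ℤ] (Fin (2*o) → ℤ) := LinearMap.id - sec ∘ₗ Γ'.mkQ with hπ0def
  have hπ0mem : ∀ x, π0 x ∈ Γ' := by
    intro x
    have h1 : Γ'.mkQ (π0 x) = 0 := by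
      rw [hπ0def]
      simp only [LinearMap.sub_apply, LinearMap.id_apply, LinearMap.comp_apply, map_sub]
      have h2 := LinearMap.congr_fun hsec (Γ'.mkQ x)
      simp only [LinearMap.comp_apply, LinearMap.id_apply] at h2
      rw [h2, sub_self]
    rwa [Submodule.mkQ_apply, Submodule.Quotient.mk_eq_zero] at h1
  set π : (Fin (2*o) → ℤ) →ₗ[ℤ] ↥Γ' := π0.codRestrict Γ' hπ0mem with hπdef
  have hπid : ∀ y : ↥Γ', π (y : Fin (2*o) → ℤ) = y := by
    intro y
    apply Subtype.ext
    show π0 (y : Fin (2*o) → ℤ) = (y : Fin (2*o) → ℤ)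
    rw [hπ0def]
    simp only [LinearMap.sub_apply, LinearMap.id_apply, LinearMap.comp_apply]
    have h1 : Γ'.mkQ (y : Fin (2*o) → ℤ) = 0 := by
      rw [Submodule.mkQ_apply, Submodule.Quotient.mk_eq_zero]
      exact y.2
    rw [h1, map_zero, sub_zero]
  set ψ : (Fin (2*o) → ℤ) →ₗ[ℤ] (Fin o → ℤ) := bΓ.equivFun.toLinearMap ∘ₗ π with hψdef
  set L : Matrix (Fin o) (Fin (2*o)) ℤ := LinearMap.toMatrix' ψ with hLdef
  have hLP : L * P = 1 := by
    ext i j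
    have h1 : (L * P) i j = (L *ᵥ fun k => P k j) i := rfl
    have h2 : L *ᵥ (fun k => P k j) = ψ fun k => P k j := by
      rw [hLdef, ← Matrix.toLin'_apply, Matrix.toLin'_toMatrix']
    have h3 : (fun k => P k j) = ((bΓ j : Fin (2*o) → ℤ)) := rfl
    rw [h1, h2, h3, hψdef]
    simp only [LinearMap.comp_apply, LinearEquiv.coe_coe]
    rw [hπid (bΓ j)]
    rw [Module.Basis.equivFun_self]
    rw [Matrix.one_apply]
    simp [eq_comm]
  have hPgcd : minorGcd P = 1 := by
    have h2 : (Pᵀ * Lᵀ).det = 1 := by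
      rw [← Matrix.transpose_mul, Matrix.det_transpose, hLP, Matrix.det_one]
    have hd : ((minorGcd P : ℤ)) ∣ 1 := by
      rw [← h2]
      apply dvd_det_mul
      intro g
      have h3 : (Pᵀ.submatrix id (⇑g)).det = (P.submatrix (⇑g) id).det := by
        rw [← Matrix.transpose_submatrix, Matrix.det_transpose]
      rw [h3]
      have h4 : minorGcd P ∣ ((P.submatrix (⇑g) id).det).natAbs :=
        Finset.gcd_dvd (Finset.mem_univ g)
      exact (Int.natCast_dvd_natCast.mpr h4).trans (Int.natAbs_dvd.mpr dvd_rfl)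
    exact Nat.dvd_one.mp (by exact_mod_cast hd)
  rw [hgcdM, hPgcd, mul_one]
end

section
/- Let N ≥ 1, let K be a symmetric 2N×2N integer matrix with det K ≠ 0, and let {Λ_{a,1}, …, Λ_{a,N}} and {Λ_{b,1}, …, Λ_{b,N}} be two families of vectors in ℤ^{2N}, each linearly independent over ℚ, satisfying Λ_{a,i}ᵀ K Λ_{a,j} = 0 and Λ_{b,i}ᵀ K Λ_{b,j} = 0 for all i, j. Define the 4N×4N integer matrix K′ = [[0, I], [I, −K]] (N.B. 2N×2N blocks) and the 2N vectors Λ′_i = (K Λ_{a,i}, Λ_{a,i}) for 1 ≤ i ≤ N and Λ′_{N+j} = (0, Λ_{b,j}) for 1 ≤ j ≤ N in ℤ^{4N}. Then K′ is symmetric with determinant ±1, the vectors Λ′_1, …, Λ′_{2N} are linearly independent over ℚ, and Λ′_iᵀ K′ Λ′_j = 0 for all 1 ≤ i, j ≤ 2N. -/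
open Matrix

/-- (Cylinder-to-disk change of variables.)  Let `K` be a symmetric
nonsingular `2N × 2N` integer matrix and let `Λ_{a,i}`, `Λ_{b,i}` (`1 ≤ i ≤ N`) be two
families of integer vectors, each linearly independent over `ℚ` and each satisfying the
null vector condition with respect to `K`.  Then the `4N × 4N` matrix
`K' = [[0, I], [I, -K]]` is symmetric with determinant `±1`, the `2N` vectors
`Λ'ᵢ = (K Λ_{a,i}, Λ_{a,i})` and `Λ'_{N+j} = (0, Λ_{b,j})` are linearly independent over
`ℚ`, and they satisfy the null vector condition with respect to `K'`. -/
theorem cylinder_change_of_variables (N : ℕ) (hN : 1 ≤ N)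
    (K : Matrix (Fin (2 * N)) (Fin (2 * N)) ℤ) (hK : K.IsSymm) (hdet : K.det ≠ 0)
    (Λa Λb : Fin N → Fin (2 * N) → ℤ)
    (hinda : LinearIndependent ℚ (fun i => fun j => (Λa i j : ℚ)))
    (hindb : LinearIndependent ℚ (fun i => fun j => (Λb i j : ℚ)))
    (hnulla : ∀ i j, Λa i ⬝ᵥ (K *ᵥ Λa j) = 0)
    (hnullb : ∀ i j, Λb i ⬝ᵥ (K *ᵥ Λb j) = 0) :
    let K' : Matrix (Fin (2 * N) ⊕ Fin (2 * N)) (Fin (2 * N) ⊕ Fin (2 * N)) ℤ :=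
      Matrix.fromBlocks 0 1 1 (-K)
    let Λ' : Fin N ⊕ Fin N → Fin (2 * N) ⊕ Fin (2 * N) → ℤ :=
      Sum.elim (fun i => Sum.elim (K *ᵥ Λa i) (Λa i)) (fun j => Sum.elim 0 (Λb j))
    K'.IsSymm ∧ (K'.det = 1 ∨ K'.det = -1) ∧
    LinearIndependent ℚ (fun i => fun j => (Λ' i j : ℚ)) ∧
    (∀ i j, Λ' i ⬝ᵥ (K' *ᵥ Λ' j) = 0) := by
  intro K' Λ'
  -- symmetry
  have hsymm : K'.IsSymm := by
    unfold K'
    rw [Matrix.IsSymm, Matrix.fromBlocks_transpose]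
    simp [hK.eq, Matrix.transpose_neg]
  -- determinant
  have hdet' : K'.det = 1 ∨ K'.det = -1 := by
    have hmul : K' * Matrix.fromBlocks K 1 1 0 = 1 := by
      unfold K'
      rw [Matrix.fromBlocks_multiply]
      simp [Matrix.fromBlocks_one]
    have h2 : K'.det * (Matrix.fromBlocks K 1 1 0 :
        Matrix (Fin (2 * N) ⊕ Fin (2 * N)) (Fin (2 * N) ⊕ Fin (2 * N)) ℤ).det = 1 := by
      rw [← Matrix.det_mul, hmul, Matrix.det_one]
    exact Int.isUnit_iff.mp (IsUnit.of_mul_eq_one _ h2)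
  refine ⟨hsymm, hdet', ?_, ?_⟩
  · -- linear independence
    rw [Fintype.linearIndependent_iff]
    intro g hg
    have hgl : ∀ l, ∑ i : Fin N ⊕ Fin N, g i * (Λ' i l : ℚ) = 0 := by
      intro l
      have := congrFun hg l
      simpa [Finset.sum_apply] using this
    set Kq : Matrix (Fin (2 * N)) (Fin (2 * N)) ℚ := K.map (Int.cast) with hKq
    have hdetq : Kq.det ≠ 0 := by
      have h2 : ((Int.castRingHom ℚ).mapMatrix K).det ≠ 0 := by
        rw [← RingHom.map_det]
        simpa using hdet
      simpa [RingHom.mapMatrix_apply, hKq] using h2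
    -- first block equations give Kq *ᵥ v = 0 with v = ∑ ga i • Λa i
    have hv : (Kq *ᵥ (fun l => ∑ i : Fin N, g (Sum.inl i) * (Λa i l : ℚ))) = 0 := by
      funext k
      have h1 := hgl (Sum.inl k)
      rw [Fintype.sum_sum_type] at h1
      simp only [Λ', Sum.elim_inl, Sum.elim_inr, Pi.zero_apply, Int.cast_zero, mul_zero,
        Finset.sum_const_zero, add_zero] at h1
      rw [Matrix.mulVec, Pi.zero_apply]
      rw [show (Kq k ⬝ᵥ fun l => ∑ i : Fin N, g (Sum.inl i) * (Λa i l : ℚ)) =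
          ∑ i : Fin N, g (Sum.inl i) * ((K *ᵥ Λa i) k : ℚ) from ?_]
      · exact h1
      · simp only [dotProduct, Matrix.mulVec, hKq, Matrix.map_apply]
        push_cast
        simp_rw [Finset.mul_sum]
        rw [Finset.sum_comm]
        exact Finset.sum_congr rfl fun i _ => Finset.sum_congr rfl fun x _ => by ring
    have hva : (fun l => ∑ i : Fin N, g (Sum.inl i) * (Λa i l : ℚ)) = 0 :=
      Matrix.eq_zero_of_mulVec_eq_zero hdetq hv
    have hga : ∀ i, g (Sum.inl i) = 0 := by
      apply Fintype.linearIndependent_iff.mp hinda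
      funext l
      have := congrFun hva l
      simpa [Finset.sum_apply] using this
    have hgb : ∀ j, g (Sum.inr j) = 0 := by
      apply Fintype.linearIndependent_iff.mp hindb
      funext l
      have h2 := hgl (Sum.inr l)
      rw [Fintype.sum_sum_type] at h2
      simp only [Λ', Sum.elim_inl, Sum.elim_inr] at h2
      simp only [hga, zero_mul, Finset.sum_const_zero, zero_add] at h2
      simpa [Finset.sum_apply] using h2
    intro i; cases i with
    | inl i => exact hga i
    | inr j => exact hgb j
  · -- null vector condition
    have hKs : ∀ x y : Fin (2 * N) → ℤ, (K *ᵥ x) ⬝ᵥ y = x ⬝ᵥ (K *ᵥ y) := by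
      intro x y
      rw [Matrix.dotProduct_mulVec, ← Matrix.mulVec_transpose, hK.eq, dotProduct_comm]
    intro i j
    cases i <;> cases j <;>
      simp [Λ', K', Matrix.fromBlocks_mulVec, Sum.elim_comp_inl, Sum.elim_comp_inr,
        sumElim_dotProduct_sumElim, Matrix.neg_mulVec, Matrix.mulVec_zero,
        dotProduct_add, dotProduct_neg, hKs, hnulla, hnullb]
end

section
/- Let N ≥ 1, let K be a symmetric 2N×2N integer matrix with det K ≠ 0, and let {Λ_{a,1}, …, Λ_{a,N}} and {Λ_{b,1}, …, Λ_{b,N}} be two families of vectors in ℤ^{2N}, each linearly independent over ℚ, satisfying Λ_{a,i}ᵀ K Λ_{a,j} = 0 and Λ_{b,i}ᵀ K Λ_{b,j} = 0 for all i, j. Set K′ = [[0, I], [I, −K]] (2N×2N blocks), Λ′_i = (K Λ_{a,i}, Λ_{a,i}) for 1 ≤ i ≤ N and Λ′_{N+j} = (0, Λ_{b,j}) for 1 ≤ j ≤ N, let Γ′ = {p ∈ ℤ^{4N} : Λ′_iᵀ K′ p = 0 for all i} and let A′ be the subgroup of ℤ^{4N} generated by Λ′_1, …, Λ′_{2N}.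 Then A′ ⊆ Γ′ and the index [Γ′ : A′] is finite and equals the greatest common divisor of the absolute values of the 2N×2N minors of the 4N×2N matrix M′ whose columns are (KΛ_{a,1}, Λ_{a,1}), …, (KΛ_{a,N}, Λ_{a,N}), (0, Λ_{b,1}), …, (0, Λ_{b,N}). -/
open Matrix

lemma exists_minor_det_ne_zero {F n κ : Type*} [Field F] [Fintype n] [Fintype κ]
    [DecidableEq n] [DecidableEq κ] (E : Matrix n κ F)
    (h : LinearIndependent F (fun k => fun r => E r k)) :
    ∃ f : κ ↪ n, (E.submatrix f id).det ≠ 0 := by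
  classical
  have hcols : (fun k => fun r => E r k) = Eᵀ := rfl
  have h1 : Module.finrank F (Submodule.span F (Set.range (Eᵀ))) = Fintype.card κ := by
    rw [← hcols]; exact finrank_span_eq_card h
  have h2 : Module.finrank F (Submodule.span F (Set.range E)) = Fintype.card κ := by
    have hr1 : E.rank = Fintype.card κ := by
      rw [Matrix.rank, Matrix.range_mulVecLin]; exact h1
    have hr2 : Eᵀ.rank = Fintype.card κ := by rw [Matrix.rank_transpose]; exact hr1
    rw [Matrix.rank, Matrix.range_mulVecLin] at hr2
    exact hr2
  obtain ⟨s, hs_sub, hs_span, hs_ind⟩ := exists_linearIndependent F (Set.range E)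
  have hsfin : s.Finite := hs_ind.setFinite
  haveI := hsfin.fintype
  have hcard : s.toFinset.card = Fintype.card κ := by
    have h3 := finrank_span_set_eq_card hs_ind
    rw [hs_span, h2] at h3
    omega
  -- choose row indices
  have hex : ∀ v : s, ∃ r : n, E r = (v : κ → F) := fun v => hs_sub v.2
  choose g hg using hex
  have hginj : Function.Injective g := by
    intro u v huv
    have : (u : κ → F) = v := by rw [← hg u, ← hg v, huv]
    exact Subtype.ext this
  have : Fintype.card κ = Fintype.card s := by
    rw [← hcard, Set.toFinset_card]
  let e : κ ≃ s := Fintype.equivOfCardEq this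
  refine ⟨⟨fun k => g (e k), fun a b hab => e.injective (hginj hab)⟩, ?_⟩
  have hrows : (fun k => (E.submatrix (fun k => g (e k)) id) k) = fun k => ((e k : s) : κ → F) := by
    funext k
    exact hg (e k)
  have hind2 : LinearIndependent F (fun k => ((e k : s) : κ → F)) :=
    hs_ind.comp e e.injective
  rw [← hrows] at hind2
  have := (Matrix.linearIndependent_rows_iff_isUnit (K := F)).mp hind2
  have hdet := (Matrix.isUnit_iff_isUnit_det _).mp this
  exact hdet.ne_zero


def castL (n : Type*) : (n → ℤ) →ₗ[ℤ] (n → ℚ) where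
  toFun p := fun i => (p i : ℚ)
  map_add' p q := by funext i; simp
  map_smul' r p := by funext i; simp

theorem lattice_index_eq_minorGcd {n κ : Type*} [Fintype n] [Fintype κ]
    [DecidableEq n] [DecidableEq κ] (c : κ → n → ℤ)
    (hind : LinearIndependent ℚ (fun k => fun i => (c k i : ℚ)))
    (S : AddSubgroup (n → ℤ))
    (hS : ∀ p, p ∈ S ↔
      (fun i => (p i : ℚ)) ∈ Submodule.span ℚ (Set.range (fun k => fun i => (c k i : ℚ)))) :
    AddSubgroup.closure (Set.range c) ≤ S ∧
    (AddSubgroup.closure (Set.range c)).relIndex S ≠ 0 ∧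
    (AddSubgroup.closure (Set.range c)).relIndex S = minorGcd (Matrix.of fun r k => c k r) := by
  classical
  set cq : κ → n → ℚ := fun k => fun i => (c k i : ℚ) with hcq
  have hcomp : cq = (castL n) ∘ c := rfl
  have hsmul : Function.Injective fun r : ℤ => r • (1 : ℚ) := by
    intro a b h
    simpa using h
  have hindZq : LinearIndependent ℤ cq := hind.restrict_scalars hsmul
  have hindZ : LinearIndependent ℤ c := by
    rw [hcomp] at hindZq
    exact LinearIndependent.of_comp (castL n) hindZq
  set V : Submodule ℚ (n → ℚ) := Submodule.span ℚ (Set.range cq) with hV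
  set Sm : Submodule ℤ (n → ℤ) := (V.restrictScalars ℤ).comap (castL n) with hSm
  set Am : Submodule ℤ (n → ℤ) := Submodule.span ℤ (Set.range c) with hAm
  have hAS : Am ≤ Sm := by
    rw [hAm, Submodule.span_le]
    rintro x ⟨k, rfl⟩
    show castL n (c k) ∈ V.restrictScalars ℤ
    exact Submodule.subset_span ⟨k, rfl⟩
  -- identification of the two subgroups
  have hSeq : S = Sm.toAddSubgroup := by
    ext p
    rw [hS p]
    rfl
  have hAeq : AddSubgroup.closure (Set.range c) = Am.toAddSubgroup := by
    apply le_antisymm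
    · rw [AddSubgroup.closure_le]
      intro x hx
      exact Submodule.subset_span hx
    · intro x hx
      have h1 : Am ≤ AddSubgroup.toIntSubmodule (AddSubgroup.closure (Set.range c)) := by
        rw [hAm, Submodule.span_le]
        exact AddSubgroup.subset_closure
      exact h1 hx
  -- saturation of Sm
  have hsat : ∀ (y : n → ℤ) (q : ℤ), q ≠ 0 → q • y ∈ Sm → y ∈ Sm := by
    intro y q hq hmem
    have h1 : castL n (q • y) ∈ V := hmem
    rw [_root_.map_smul] at h1
    have h1' : ((q : ℚ)) • castL n y ∈ V := by
      rw [Int.cast_smul_eq_zsmul]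
      exact h1
    have h2 : castL n y = ((q : ℚ)⁻¹ • ((q : ℚ) • castL n y) : n → ℚ) := by
      rw [smul_smul, inv_mul_cancel₀ (by exact_mod_cast hq), one_smul]
    show castL n y ∈ V
    rw [h2]
    exact Submodule.smul_mem _ _ h1'
  -- Smith normal form
  have hVrank : Module.finrank ℚ V = Fintype.card κ := finrank_span_eq_card hind
  obtain ⟨nn, oo, hno, bO, bN, a, ha⟩ :=
    Submodule.exists_smith_normal_form_of_le (Pi.basisFun ℤ n) Am Sm hAS
  set bA : Module.Basis κ ℤ Am := Module.Basis.span hindZ with hbA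
  have hnn : nn = Fintype.card κ := by
    have e := bN.indexEquiv bA
    simpa using Fintype.card_congr e
  have hbOind : LinearIndependent ℤ (fun i => ((bO i : n → ℤ))) :=
    bO.linearIndependent.map' Sm.subtype (Submodule.ker_subtype _)
  have hbOq : LinearIndependent ℚ (fun i => castL n ((bO i : n → ℤ))) := by
    have h1 : LinearIndependent ℤ (fun i => castL n ((bO i : n → ℤ))) :=
      hbOind.map' (castL n) (LinearMap.ker_eq_bot.mpr (by
        intro p q h
        funext i
        have : (p i : ℚ) = (q i : ℚ) := congrFun h i
        exact_mod_cast this))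
    exact h1.localization (Rₛ := ℚ) (S := nonZeroDivisors ℤ)
  have hoo : oo = Fintype.card κ := by
    have hle1 : Submodule.span ℚ (Set.range fun i => castL n ((bO i : n → ℤ))) ≤ V := by
      rw [Submodule.span_le]
      rintro x ⟨i, rfl⟩
      exact (bO i).2
    have h2 : Module.finrank ℚ
        (Submodule.span ℚ (Set.range fun i => castL n ((bO i : n → ℤ)))) = oo := by
      rw [finrank_span_eq_card hbOq, Fintype.card_fin]
    have h3 : oo ≤ Fintype.card κ := by
      rw [← h2, ← hVrank]
      exact Submodule.finrank_mono hle1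
    omega
  subst hnn hoo
  have ha' : ∀ i, (bN i : n → ℤ) = a i • (bO i : n → ℤ) := by
    intro i
    have h1 : Fin.castLE hno i = i := by
      ext
      simp [Fin.castLE]
    rw [← h1]
    exact ha i
  have hane : ∀ i, a i ≠ 0 := by
    intro i hi
    have h1 : (bN i : n → ℤ) = 0 := by rw [ha' i, hi, zero_smul]
    exact bN.ne_zero i (Subtype.ext h1)
  have hindex : (Am.toAddSubgroup).relIndex (Sm.toAddSubgroup) = ∏ i, (a i).natAbs := by
    set Ap : Submodule ℤ Sm := Am.comap Sm.subtype with hAp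
    have hrel : (Am.toAddSubgroup).relIndex (Sm.toAddSubgroup) = Nat.card (Sm ⧸ Ap) := rfl
    rw [hrel]
    -- Ap is spanned by the bN vectors viewed inside Sm
    set bNin : Fin (Fintype.card κ) → Sm := fun i => ⟨(bN i : n → ℤ), hAS (bN i).2⟩ with hbNin
    have hApspan : Ap = Submodule.span ℤ (Set.range bNin) := by
      apply le_antisymm
      · intro x hx
        have hx' : (x : n → ℤ) ∈ Am := hx
        set y : Am := ⟨(x : n → ℤ), hx'⟩ with hy
        have hrepr : y = ∑ i, (bN.repr y i) • bN i := (bN.sum_repr y).symm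
        have hcoe : (x : n → ℤ) = ∑ i, (bN.repr y i) • (bN i : n → ℤ) := by
          conv_lhs => rw [show (x : n → ℤ) = (y : n → ℤ) from rfl, hrepr]
          push_cast
          rfl
        have : x = ∑ i, (bN.repr y i) • bNin i := by
          apply Subtype.ext
          rw [hcoe]
          push_cast
          rfl
        rw [this]
        exact Submodule.sum_mem _ fun i _ =>
          Submodule.smul_mem _ _ (Submodule.subset_span ⟨i, rfl⟩)
      · rw [Submodule.span_le]
        rintro x ⟨i, rfl⟩
        exact (bN i).2
    -- image of Ap under the coordinate equivalence
    have hmap : Ap.map ((bO.equivFun : Sm ≃ₗ[ℤ] (Fin (Fintype.card κ) → ℤ)) : Sm →ₗ[ℤ] (Fin (Fintype.card κ) → ℤ)) =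
        Submodule.pi Set.univ (fun i : Fin (Fintype.card κ) => Ideal.span {a i}) := by
      rw [hApspan, Submodule.map_span]
      have himg : (bO.equivFun : Sm ≃ₗ[ℤ] (Fin (Fintype.card κ) → ℤ)) '' Set.range bNin =
          Set.range (fun i => Pi.single i (a i) : Fin (Fintype.card κ) → Fin (Fintype.card κ) → ℤ) := by
        rw [← Set.range_comp]
        have hfun : ((bO.equivFun : Sm ≃ₗ[ℤ] (Fin (Fintype.card κ) → ℤ)) ∘ bNin) =
            (fun i => Pi.single i (a i) : Fin (Fintype.card κ) → Fin (Fintype.card κ) → ℤ) := by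
          funext i
          have h1 : bNin i = a i • bO i := by
            apply Subtype.ext
            rw [hbNin]
            simpa using ha' i
          show bO.equivFun (bNin i) = Pi.single i (a i)
          rw [h1, _root_.map_smul]
          funext j
          rw [Pi.smul_apply, bO.equivFun_self]
          by_cases h : i = j
          · subst h; simp
          · simp [h, Pi.single_apply, Ne.symm h]
        rw [hfun]
      rw [LinearEquiv.coe_coe, himg]
      apply le_antisymm
      · rw [Submodule.span_le]
        rintro x ⟨i, rfl⟩
        intro j _
        by_cases h : j = i
        · subst h; simp [Pi.single_apply]
        · simp [Pi.single_apply, h]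
      · intro x hx
        have hx' : ∀ j, x j ∈ Ideal.span ({a j} : Set ℤ) := fun j => hx j (Set.mem_univ j)
        have : ∀ j, ∃ w, w * a j = x j := fun j =>
          Ideal.mem_span_singleton'.mp (hx' j)
        choose w hw using this
        have hxsum : x = ∑ j, w j • Pi.single j (a j) := by
          funext r
          rw [← Finset.univ_sum_single x]
          rw [Finset.sum_apply, Finset.sum_apply]
          apply Finset.sum_congr rfl
          intro j _
          by_cases h : r = j
          · subst h; simp [Pi.single_apply, hw, mul_comm]
          · simp [Pi.single_apply, h]
        rw [hxsum]
        exact Submodule.sum_mem _ fun j _ =>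
          Submodule.smul_mem _ _ (Submodule.subset_span ⟨j, rfl⟩)
    have e1 : (Sm ⧸ Ap) ≃ₗ[ℤ] ((Fin (Fintype.card κ) → ℤ) ⧸ Submodule.pi Set.univ (fun i : Fin (Fintype.card κ) => Ideal.span {a i})) :=
      Submodule.Quotient.equiv Ap _ (bO.equivFun : Sm ≃ₗ[ℤ] (Fin (Fintype.card κ) → ℤ)) hmap
    have e2 := Submodule.quotientPi (R := ℤ) (Ms := fun _ : Fin (Fintype.card κ) => ℤ)
      (fun i => Ideal.span {a i})
    rw [Nat.card_congr (e1.toEquiv.trans e2.toEquiv), Nat.card_pi]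
    refine Finset.prod_congr rfl fun i _ => ?_
    rw [Nat.card_congr (Int.quotientSpanEquivZMod (a i)).toEquiv, Nat.card_zmod]
  have hminors : minorGcd (Matrix.of fun r k => c k r) = ∏ i, (a i).natAbs := by
    set M : Matrix n κ ℤ := Matrix.of fun r k => c k r with hM
    set ε : κ ≃ Fin (Fintype.card κ) := Fintype.equivFin κ with hε
    set bA : Module.Basis κ ℤ (Am) := Module.Basis.span hindZ with hbA
    set bA' := bA.reindex ε with hbA'
    set W : Matrix (Fin (Fintype.card κ)) (Fin (Fintype.card κ)) ℤ := bN.toMatrix ⇑bA' with hW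
    have hWunit : IsUnit W.det := by
      have h1 : W * bA'.toMatrix ⇑bN = 1 := bN.toMatrix_mul_toMatrix_flip bA'
      exact IsUnit.of_mul_eq_one (a := W.det) (bA'.toMatrix ⇑bN).det
        (by rw [← Matrix.det_mul, h1, Matrix.det_one])
    have hdetW : W.det.natAbs = 1 := Int.isUnit_iff_natAbs_eq.mp hWunit
    set E : Matrix n (Fin (Fintype.card κ)) ℤ := Matrix.of (fun r i => (bO i : n → ℤ) r) with hE
    set Y : Matrix (Fin (Fintype.card κ)) (Fin (Fintype.card κ)) ℤ := Matrix.diagonal a * W with hY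
    set t : ℕ := ∏ i, (a i).natAbs with ht
    have hdetY : Y.det.natAbs = t := by
      rw [hY, Matrix.det_mul, Matrix.det_diagonal, Int.natAbs_mul, hdetW, mul_one, ht]
      exact map_prod Int.natAbsHom.toMonoidHom a Finset.univ
    have hkey : ∀ k : κ, c k = ∑ j, (W j (ε k) * a j) • (bO j : n → ℤ) := by
      intro k
      have h1 : (bA k : n → ℤ) = c k := congrArg Subtype.val (Module.Basis.span_apply hindZ k)
      have h2 : (bA k) = ∑ j, bN.repr (bA k) j • bN j := (bN.sum_repr (bA k)).symm
      have h3 : (c k : n → ℤ) = ∑ j, bN.repr (bA k) j • (bN j : n → ℤ) := by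
        rw [← h1]
        conv_lhs => rw [h2]
        push_cast
        rfl
      have h4 : ∀ j, W j (ε k) = bN.repr (bA k) j := by
        intro j
        rw [hW, Module.Basis.toMatrix_apply, hbA', Module.Basis.reindex_apply, Equiv.symm_apply_apply]
      rw [h3]
      refine Finset.sum_congr rfl fun j _ => ?_
      rw [h4 j, ha' j, smul_smul]
    set Mf : Matrix n (Fin (Fintype.card κ)) ℤ := Matrix.of fun r i => c (ε.symm i) r with hMf
    have hYji : ∀ j i, Y j i = a j * W j i := fun j i => by
      rw [hY, Matrix.diagonal_mul]
    have hMfEY : Mf = E * Y := by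
      ext r i
      show c (ε.symm i) r = (E * Y) r i
      rw [Matrix.mul_apply, hkey (ε.symm i), Finset.sum_apply]
      refine Finset.sum_congr rfl fun j _ => ?_
      rw [Pi.smul_apply, smul_eq_mul, hYji, Equiv.apply_symm_apply]
      show W j i * a j * (bO j : n → ℤ) r = (bO j : n → ℤ) r * (a j * W j i)
      ring
    have hgcd1 : minorGcd M =
        Finset.univ.gcd (fun g : Fin (Fintype.card κ) ↪ n => ((Mf.submatrix g id).det).natAbs) := by
      apply Nat.dvd_antisymm
      · apply Finset.dvd_gcd
        intro g _
        have hsub : Mf.submatrix g id =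
            (M.submatrix (ε.toEmbedding.trans g) id).submatrix ε.symm ε.symm := by
          ext r i
          simp [hMf, hM, Matrix.submatrix_apply]
        have hdet : (Mf.submatrix g id).det = (M.submatrix (ε.toEmbedding.trans g) id).det := by
          rw [hsub, Matrix.det_submatrix_equiv_self]
        rw [hdet]
        exact Finset.gcd_dvd (Finset.mem_univ _)
      · apply Finset.dvd_gcd
        intro f _
        have hsub : M.submatrix f id =
            (Mf.submatrix (ε.symm.toEmbedding.trans f) id).submatrix ε ε := by
          ext k k'
          simp [hMf, hM, Matrix.submatrix_apply]
        have hdet : (M.submatrix f id).det = (Mf.submatrix (ε.symm.toEmbedding.trans f) id).det := by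
          rw [hsub, Matrix.det_submatrix_equiv_self]
        rw [hdet]
        exact Finset.gcd_dvd (Finset.mem_univ _)
    have hsubmul : ∀ g : Fin (Fintype.card κ) ↪ n, (Mf.submatrix g id) = (E.submatrix g id) * Y := by
      intro g
      ext r i
      rw [hMfEY]
      simp [Matrix.mul_apply, Matrix.submatrix_apply]
    have hgcd2 : Finset.univ.gcd (fun g : Fin (Fintype.card κ) ↪ n => ((Mf.submatrix g id).det).natAbs) =
        (Finset.univ.gcd (fun g : Fin (Fintype.card κ) ↪ n => ((E.submatrix g id).det).natAbs)) * t := by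
      have hval : ∀ g : Fin (Fintype.card κ) ↪ n, ((Mf.submatrix g id).det).natAbs =
          ((E.submatrix g id).det).natAbs * t := by
        intro g
        rw [hsubmul g, Matrix.det_mul, Int.natAbs_mul, hdetY]
      simp_rw [hval]
      rw [Finset.gcd_mul_right]
      simp
    have hG1 : Finset.univ.gcd (fun g : Fin (Fintype.card κ) ↪ n => ((E.submatrix g id).det).natAbs) = 1 := by
      rw [Nat.eq_one_iff_not_exists_prime_dvd]
      intro p hp hpdvd
      haveI : Fact p.Prime := ⟨hp⟩
      haveI : NeZero p := ⟨hp.ne_zero⟩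
      set Ebar : Matrix n (Fin (Fintype.card κ)) (ZMod p) := E.map (Int.cast : ℤ → ZMod p) with hEbar
      have hminor : ∀ g : Fin (Fintype.card κ) ↪ n, ((Ebar.submatrix g id)).det = 0 := by
        intro g
        have h1 : p ∣ ((E.submatrix g id).det).natAbs :=
          dvd_trans hpdvd (Finset.gcd_dvd (Finset.mem_univ g))
        have h2 : (p : ℤ) ∣ (E.submatrix g id).det :=
          Int.dvd_natAbs.mp (Int.natCast_dvd_natCast.mpr h1)
        have h3 : Ebar.submatrix g id = (E.submatrix g id).map (Int.cast : ℤ → ZMod p) := rfl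
        rw [h3]
        have h4 := RingHom.map_det (Int.castRingHom (ZMod p)) (E.submatrix g id)
        rw [RingHom.mapMatrix_apply] at h4
        have h5 : ((E.submatrix (⇑g) id).map (Int.cast : ℤ → ZMod p)) =
            (E.submatrix (⇑g) id).map (Int.castRingHom (ZMod p)) := rfl
        rw [h5, ← h4]
        exact (ZMod.intCast_zmod_eq_zero_iff_dvd _ p).mpr h2
      have hnotind : ¬ LinearIndependent (ZMod p) (fun i => fun r => Ebar r i) := by
        intro hind
        obtain ⟨g, hg⟩ := exists_minor_det_ne_zero Ebar hind
        exact hg (hminor g)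
      rw [Fintype.linearIndependent_iff] at hnotind
      push_neg at hnotind
      obtain ⟨z, hz0, i0, hi0⟩ := hnotind
      set z' : Fin (Fintype.card κ) → ℤ := fun i => ((z i).val : ℤ) with hz'
      have hz'cast : ∀ i, ((z' i : ℤ) : ZMod p) = z i := by
        intro i
        rw [hz']
        push_cast
        exact ZMod.natCast_rightInverse (z i)
      set u : n → ℤ := fun r => ∑ i, z' i * (bO i : n → ℤ) r with hu
      have humem : u ∈ Sm := by
        have h4 : u = ∑ i, z' i • ((bO i : n → ℤ) : n → ℤ) := by
          funext r
          rw [hu, Finset.sum_apply]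
          rfl
        rw [h4]
        exact Submodule.sum_mem _ fun i _ => Submodule.smul_mem _ _ (bO i).2
      have hdvdu : ∀ r, (p : ℤ) ∣ u r := by
        intro r
        rw [← ZMod.intCast_zmod_eq_zero_iff_dvd]
        have hcast : ((u r : ℤ) : ZMod p) = ∑ i, z i * Ebar r i := by
          rw [hu]
          push_cast
          refine Finset.sum_congr rfl fun i _ => ?_
          rw [hz'cast i]
          rfl
        have hrow : ∑ i, z i * Ebar r i = 0 := by
          have h5 := congrFun hz0 r
          rw [Finset.sum_apply] at h5
          simpa using h5
        rw [hcast, hrow]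
      choose y hy using fun r => (hdvdu r)
      have hpy : (p : ℤ) • y ∈ Sm := by
        have h6 : (p : ℤ) • y = u := by
          funext r
          rw [Pi.smul_apply, smul_eq_mul, ← hy r]
        rw [h6]
        exact humem
      have hymem : y ∈ Sm := hsat y p (by exact_mod_cast hp.ne_zero) hpy
      set w : Fin (Fintype.card κ) → ℤ := fun i => bO.repr ⟨y, hymem⟩ i with hw
      have hyrep : y = ∑ i, w i • (bO i : n → ℤ) := by
        have h7 : (⟨y, hymem⟩ : Sm) = ∑ i, w i • bO i := by
          rw [hw]
          exact (bO.sum_repr _).symm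
        calc y = ((⟨y, hymem⟩ : Sm) : n → ℤ) := rfl
          _ = ((∑ i, w i • bO i : Sm) : n → ℤ) := by rw [← h7]
          _ = ∑ i, w i • (bO i : n → ℤ) := by push_cast; rfl
      have hbOind : LinearIndependent ℤ (fun i => ((bO i : n → ℤ) : n → ℤ)) :=
        bO.linearIndependent.map' Sm.subtype (Submodule.ker_subtype _)
      have hcomb : ∑ i, (z' i - p * w i) • ((bO i : n → ℤ) : n → ℤ) = 0 := by
        have h9 : ∑ i, (z' i - p * w i) • ((bO i : n → ℤ) : n → ℤ)
            = (∑ i, z' i • ((bO i : n → ℤ) : n → ℤ)) - (p : ℤ) • (∑ i, w i • ((bO i : n → ℤ) : n → ℤ)) := by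
          rw [Finset.smul_sum, ← Finset.sum_sub_distrib]
          refine Finset.sum_congr rfl fun i _ => ?_
          rw [sub_smul, smul_smul]
        rw [h9, ← hyrep]
        have h10 : ∑ i, z' i • ((bO i : n → ℤ) : n → ℤ) = u := by
          funext r
          rw [hu, Finset.sum_apply]
          rfl
        rw [h10]
        funext r
        rw [Pi.sub_apply, Pi.smul_apply, smul_eq_mul, ← hy r, sub_self]
        rfl
      have hzero := (Fintype.linearIndependent_iff.mp hbOind) _ hcomb
      apply hi0
      have h11 : z' i0 = p * w i0 := by
        have h12 := hzero i0
        omega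
      rw [← hz'cast i0, h11]
      push_cast
      simp
    rw [hM] at hgcd1
    rw [hgcd1, hgcd2, hG1, one_mul]
  refine ⟨?_, ?_, ?_⟩
  · rw [hAeq, hSeq]
    intro x hx
    exact hAS hx
  · rw [hAeq, hSeq, hindex]
    rw [Finset.prod_ne_zero_iff]
    intro i _
    exact Int.natAbs_ne_zero.mpr (hane i)
  · rw [hAeq, hSeq, hindex, hminors]


/-- (Ground state degeneracy on a cylinder.)  With `K` symmetric
nonsingular and two null-vector families `Λ_{a,i}`, `Λ_{b,i}` gapping the two edges, set
`K' = [[0, I], [I, -K]]`, `Λ'ᵢ = (K Λ_{a,i}, Λ_{a,i})`, `Λ'_{N+j} = (0, Λ_{b,j})`,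
`Γ' = {p ∈ ℤ^{4N} : Λ'ᵢᵀ K' p = 0 ∀ i}` and `A'` the subgroup generated by the `Λ'ᵢ`.
Then `A' ⊆ Γ'` and the index `[Γ' : A']` is finite and equals the gcd of the absolute
values of the `2N × 2N` minors of the matrix `M'` with columns the `Λ'ᵢ`. -/
theorem cylinder_ground_state_degeneracy (N : ℕ) (hN : 1 ≤ N)
    (K : Matrix (Fin (2 * N)) (Fin (2 * N)) ℤ) (hK : K.IsSymm) (hdet : K.det ≠ 0)
    (Λa Λb : Fin N → Fin (2 * N) → ℤ)
    (hinda : LinearIndependent ℚ (fun i => fun j => (Λa i j : ℚ)))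
    (hindb : LinearIndependent ℚ (fun i => fun j => (Λb i j : ℚ)))
    (hnulla : ∀ i j, Λa i ⬝ᵥ (K *ᵥ Λa j) = 0)
    (hnullb : ∀ i j, Λb i ⬝ᵥ (K *ᵥ Λb j) = 0) :
    let K' : Matrix (Fin (2 * N) ⊕ Fin (2 * N)) (Fin (2 * N) ⊕ Fin (2 * N)) ℤ :=
      Matrix.fromBlocks 0 1 1 (-K)
    let Λ' : Fin N ⊕ Fin N → Fin (2 * N) ⊕ Fin (2 * N) → ℤ :=
      Sum.elim (fun i => Sum.elim (K *ᵥ Λa i) (Λa i)) (fun j => Sum.elim 0 (Λb j))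
    AddSubgroup.closure (Set.range Λ') ≤ sectorLattice K' Λ' ∧
    (AddSubgroup.closure (Set.range Λ')).relIndex (sectorLattice K' Λ') ≠ 0 ∧
    (AddSubgroup.closure (Set.range Λ')).relIndex (sectorLattice K' Λ') =
      minorGcd (Matrix.of fun r c => Λ' c r) := by
  intro K' Λ'
  classical
  have hK' : K' = Matrix.fromBlocks 0 1 1 (-K) := rfl
  have hΛ' : Λ' = Sum.elim (fun i => Sum.elim (K *ᵥ Λa i) (Λa i)) (fun j => Sum.elim 0 (Λb j)) := rfl
  let n := (Fin (2*N) ⊕ Fin (2*N))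
  let κ := (Fin N ⊕ Fin N)
  -- symmetry helper
  have hsym : ∀ x y : Fin (2*N) → ℤ, (K *ᵥ x) ⬝ᵥ y = x ⬝ᵥ (K *ᵥ y) := by
    intro x y
    have h := Matrix.mulVec_transpose K x
    rw [show Kᵀ = K from hK] at h
    rw [h, ← Matrix.dotProduct_mulVec]
  -- the mulVec images
  have hmv1 : ∀ i, K' *ᵥ Λ' (Sum.inl i) = Sum.elim (Λa i) 0 := by
    intro i
    rw [hK', hΛ']
    show Matrix.fromBlocks 0 1 1 (-K) *ᵥ (Sum.elim (K *ᵥ Λa i) (Λa i)) = _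
    rw [Matrix.fromBlocks_mulVec]
    simp [Matrix.zero_mulVec, Matrix.one_mulVec, Matrix.neg_mulVec]
  have hmv2 : ∀ j, K' *ᵥ Λ' (Sum.inr j) = Sum.elim (Λb j) (-(K *ᵥ Λb j)) := by
    intro j
    rw [hK', hΛ']
    show Matrix.fromBlocks 0 1 1 (-K) *ᵥ (Sum.elim 0 (Λb j)) = _
    rw [Matrix.fromBlocks_mulVec]
    simp [Matrix.zero_mulVec, Matrix.one_mulVec, Matrix.neg_mulVec]
  have hnull : ∀ v w, Λ' v ⬝ᵥ (K' *ᵥ Λ' w) = 0 := by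
    rintro (i | i) (j | j)
    · rw [hmv1 j]
      show (Sum.elim (K *ᵥ Λa i) (Λa i)) ⬝ᵥ (Sum.elim (Λa j) 0) = 0
      rw [sumElim_dotProduct_sumElim, dotProduct_zero, add_zero,
        hsym, hnulla i j]
    · rw [hmv2 j]
      show (Sum.elim (K *ᵥ Λa i) (Λa i)) ⬝ᵥ (Sum.elim (Λb j) (-(K *ᵥ Λb j))) = 0
      rw [sumElim_dotProduct_sumElim, dotProduct_neg, hsym]
      rw [add_neg_cancel]
    · rw [hmv1 j]
      show (Sum.elim 0 (Λb i)) ⬝ᵥ (Sum.elim (Λa j) 0) = 0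
      rw [sumElim_dotProduct_sumElim, zero_dotProduct, dotProduct_zero,
        add_zero]
    · rw [hmv2 j]
      show (Sum.elim 0 (Λb i)) ⬝ᵥ (Sum.elim (Λb j) (-(K *ᵥ Λb j))) = 0
      rw [sumElim_dotProduct_sumElim, zero_dotProduct, dotProduct_neg,
        hnullb i j, zero_add, neg_zero]
  -- rational versions
  set Λq : κ → n → ℚ := fun v => fun r => (Λ' v r : ℚ) with hΛq
  set Kq : Matrix n n ℚ := K'.map (Int.cast : ℤ → ℚ) with hKq
  set KQ : Matrix (Fin (2*N)) (Fin (2*N)) ℚ := K.map (Int.cast : ℤ → ℚ) with hKQ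
  set Λaq : Fin N → Fin (2*N) → ℚ := fun i => fun s => (Λa i s : ℚ) with hΛaq
  set Λbq : Fin N → Fin (2*N) → ℚ := fun j => fun s => (Λb j s : ℚ) with hΛbq
  have hKQdet : IsUnit KQ.det := by
    have h1 := RingHom.map_det (Int.castRingHom ℚ) K
    rw [RingHom.mapMatrix_apply] at h1
    have h2 : KQ.det = ((K.det : ℤ) : ℚ) := by
      rw [hKQ, show (Int.cast : ℤ → ℚ) = ⇑(Int.castRingHom ℚ) from rfl, ← h1]
    rw [isUnit_iff_ne_zero, h2]
    exact_mod_cast hdet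
  have hKQinj : Function.Injective (KQ.mulVec) := mulVec_injective_iff_isUnit.mpr
    ((Matrix.isUnit_iff_isUnit_det _).mpr hKQdet)
  have hcastKa : ∀ i, (fun s => ((K *ᵥ Λa i) s : ℚ)) = KQ *ᵥ Λaq i := by
    intro i
    funext s
    rw [hKQ, hΛaq]
    simp only [Matrix.mulVec, dotProduct, Matrix.map_apply]
    push_cast
    rfl
  -- linear independence of the rational gapping vectors
  have hind : LinearIndependent ℚ Λq := by
    rw [Fintype.linearIndependent_iff]
    intro g hg
    have hinl : ∀ s, (∑ v : κ, g v • Λq v) (Sum.inl s) = 0 := fun s => by rw [hg]; rfl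
    have hinr : ∀ s, (∑ v : κ, g v • Λq v) (Sum.inr s) = 0 := fun s => by rw [hg]; rfl
    have hsum1 : ∀ s, (∑ i, g (Sum.inl i) • (KQ *ᵥ Λaq i)) s = 0 := by
      intro s
      have h1 := hinl s
      rw [Finset.sum_apply] at h1
      rw [Fintype.sum_sum_type] at h1
      simp only [Pi.smul_apply] at h1
      have h2 : ∀ j : Fin N, g (Sum.inr j) • Λq (Sum.inr j) (Sum.inl s) = 0 := by
        intro j
        show g (Sum.inr j) • ((0 : Fin (2*N) → ℤ) s : ℚ) = 0
        simp
      have h2' : ∑ j : Fin N, g (Sum.inr j) • Λq (Sum.inr j) (Sum.inl s) = 0 :=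
        Finset.sum_eq_zero fun j _ => h2 j
      rw [h2', add_zero] at h1
      rw [Finset.sum_apply]
      rw [← h1]
      refine Finset.sum_congr rfl fun i _ => ?_
      rw [← hcastKa i]
      rfl
    have hKsum : KQ *ᵥ (∑ i, g (Sum.inl i) • Λaq i) = 0 := by
      have h3 : KQ *ᵥ (∑ i, g (Sum.inl i) • Λaq i) = ∑ i, g (Sum.inl i) • (KQ *ᵥ Λaq i) := by
        rw [← Matrix.mulVecLin_apply, map_sum]
        refine Finset.sum_congr rfl fun i _ => ?_
        rw [_root_.map_smul, Matrix.mulVecLin_apply]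
      rw [h3]
      funext s
      rw [Finset.sum_apply]
      have := hsum1 s
      rw [Finset.sum_apply] at this
      exact this
    have hasum : (∑ i, g (Sum.inl i) • Λaq i) = 0 := by
      apply hKQinj
      rw [hKsum, Matrix.mulVec_zero]
    have hga : ∀ i, g (Sum.inl i) = 0 :=
      Fintype.linearIndependent_iff.mp hinda _ hasum
    have hgb : ∀ j, g (Sum.inr j) = 0 := by
      have hbsum : (∑ j, g (Sum.inr j) • Λbq j) = 0 := by
        funext s
        have h1 := hinr s
        rw [Finset.sum_apply, Fintype.sum_sum_type] at h1
        simp only [Pi.smul_apply] at h1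
        have h2' : ∑ i : Fin N, g (Sum.inl i) • Λq (Sum.inl i) (Sum.inr s) = 0 :=
          Finset.sum_eq_zero fun i _ => by rw [hga i, zero_smul]
        rw [h2', zero_add] at h1
        rw [Finset.sum_apply]
        simp only [Pi.zero_apply]
        rw [← h1]
        simp only [Pi.smul_apply]
        rfl
      exact Fintype.linearIndependent_iff.mp hindb _ hbsum
    intro v
    cases v with
    | inl i => exact hga i
    | inr j => exact hgb j
  -- Step 3: characterization of the sector lattice
  set Pq : Matrix κ n ℚ := Matrix.of (fun v r => Λq v r) with hPq
  have hKqunit : IsUnit Kq.det := by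
    have hmapF : Kq = Matrix.fromBlocks 0 1 1 (-KQ) := by
      rw [hKq, hK']
      ext r s
      cases r <;> cases s <;>
        simp [Matrix.map_apply, Matrix.one_apply, apply_ite, hKQ]
    have hmul : Kq * Matrix.fromBlocks KQ 1 1 0 = 1 := by
      rw [hmapF, Matrix.fromBlocks_multiply]
      simp only [Matrix.zero_mul, Matrix.one_mul, Matrix.mul_one, Matrix.mul_zero,
        Matrix.neg_mul, zero_add, add_zero]
      rw [← Matrix.fromBlocks_one]
      congr 1 <;> abel
    exact IsUnit.of_mul_eq_one (a := Kq.det) (Matrix.fromBlocks KQ 1 1 0).det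
      (by rw [← Matrix.det_mul, hmul, Matrix.det_one])
  have hPqrank : Pq.rank = Fintype.card κ := by
    have h1 : Pqᵀ.rank = Fintype.card κ := by
      rw [Matrix.rank, Matrix.range_mulVecLin]
      have h2 : Set.range Pqᵀ.col = Set.range Λq := rfl
      rw [h2]
      exact finrank_span_eq_card hind
    rw [← Matrix.rank_transpose]
    exact h1
  have hrankPK : (Pq * Kq).rank = Fintype.card κ := by
    rw [Matrix.rank_mul_eq_left_of_isUnit_det Kq Pq hKqunit]
    exact hPqrank
  set Lmap := (Pq * Kq).mulVecLin with hLmapdef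
  have hLsurj : LinearMap.range Lmap = ⊤ := by
    apply Submodule.eq_top_of_finrank_eq
    have h1 : Module.finrank ℚ (LinearMap.range Lmap) = (Pq * Kq).rank := rfl
    rw [h1, hrankPK, Module.finrank_pi]
  have hkerrank : Module.finrank ℚ (LinearMap.ker Lmap) = Fintype.card κ := by
    have h1 := LinearMap.finrank_range_add_finrank_ker Lmap
    have h2 : Module.finrank ℚ (LinearMap.range Lmap) = Fintype.card κ := by
      rw [hLsurj]
      rw [finrank_top, Module.finrank_pi]
    rw [h2, Module.finrank_pi] at h1
    have h3 : Fintype.card n = Fintype.card κ + Fintype.card κ := by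
      show Fintype.card (Fin (2*N) ⊕ Fin (2*N)) =
        Fintype.card (Fin N ⊕ Fin N) + Fintype.card (Fin N ⊕ Fin N)
      simp only [Fintype.card_sum, Fintype.card_fin]
      ring
    omega
  have hLapp : ∀ (x : n → ℚ) (v : κ), Lmap x v = Λq v ⬝ᵥ (Kq *ᵥ x) := by
    intro x v
    show ((Pq * Kq) *ᵥ x) v = _
    rw [← Matrix.mulVec_mulVec]
    rfl
  have hcastdot : ∀ (v : κ) (p : n → ℤ),
      ((Λ' v ⬝ᵥ (K' *ᵥ p) : ℤ) : ℚ) = Λq v ⬝ᵥ (Kq *ᵥ (fun i => (p i : ℚ))) := by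
    intro v p
    simp only [dotProduct, Matrix.mulVec, hKq, Matrix.map_apply, hΛq]
    push_cast
    rfl
  set Vq := Submodule.span ℚ (Set.range Λq) with hVq
  have hVfin : Module.finrank ℚ Vq = Fintype.card κ := finrank_span_eq_card hind
  have hspanker : Vq ≤ LinearMap.ker Lmap := by
    rw [hVq, Submodule.span_le]
    rintro x ⟨w, rfl⟩
    apply LinearMap.mem_ker.mpr
    funext v
    rw [hLapp]
    have h1 : Λq w = (fun i => ((Λ' w i : ℤ) : ℚ)) := rfl
    rw [h1, ← hcastdot v (Λ' w), hnull v w]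
    rfl
  have hkereq : LinearMap.ker Lmap = Vq := by
    have := Submodule.eq_of_le_of_finrank_le hspanker (by rw [hVfin, hkerrank])
    exact this.symm
  have hchar : ∀ p : n → ℤ, (∀ v, Λ' v ⬝ᵥ (K' *ᵥ p) = 0) ↔
      (fun i => (p i : ℚ)) ∈ Submodule.span ℚ (Set.range Λq) := by
    intro p
    constructor
    · intro hp
      rw [← hVq, ← hkereq]
      apply LinearMap.mem_ker.mpr
      funext v
      rw [hLapp, ← hcastdot v p, hp v]
      rfl
    · intro hp v
      rw [← hVq, ← hkereq] at hp
      have h1 := congrFun (LinearMap.mem_ker.mp hp) v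
      rw [hLapp] at h1
      simp only [Pi.zero_apply] at h1
      have h3 := hcastdot v p
      rw [h1] at h3
      exact_mod_cast h3
  refine lattice_index_eq_minorGcd Λ' hind (sectorLattice K' Λ') ?_
  intro p
  exact ⟨fun hp => (hchar p).mp hp, fun hp v => ((hchar p).mpr hp) v⟩
end

section
/- Let N, M ≥ 1, let K_s be a symmetric 2N×2N integer matrix with det K_s ≠ 0 and K_d a symmetric 2M×2M integer matrix with det K_d ≠ 0, and set K_b = diag(−K_s, K_d). Let {Λ_{a,1}, …, Λ_{a,N}} ⊂ ℤ^{2N} be linearly independent over ℚ with Λ_{a,i}ᵀ K_s Λ_{a,j} = 0 for all i, j, and let {Λ_{b,1}, …, Λ_{b,N+M}} ⊂ ℤ^{2N+2M} be linearly independent over ℚ with Λ_{b,i}ᵀ K_b Λ_{b,j} = 0 for all i, j. Define the (4N+2M)×(4N+2M) integer matrix K′ = [[0, I, 0], [I, −K_s, 0], [0, 0, K_d]] (blocks of sizes 2N, 2N, 2M) and the 2N+M vectors Λ′_i = (K_s Λ_{a,i}, Λ_{a,i}, 0) for 1 ≤ i ≤ N and Λ′_{N+j} = (0_{2N}, Λ_{b,j})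 for 1 ≤ j ≤ N+M. Then K′ is symmetric with det K′ ≠ 0, the Λ′_i are linearly independent over ℚ, Λ′_iᵀ K′ Λ′_j = 0 for all i, j, and the index in Γ′ = {p ∈ ℤ^{4N+2M} : Λ′_iᵀ K′ p = 0 for all i} of the subgroup A′ generated by the Λ′_i is finite and equals the greatest common divisor of the absolute values of the (2N+M)×(2N+M) minors of the (4N+2M)×(2N+M) matrix M′ whose columns are the Λ′_i. -/
set_option maxHeartbeats 1000000


open Matrix

/-- Multilinear expansion of the determinant of a product of rectangular matrices. -/
theorem det_mul_expansion {k n R : Type*} [Fintype k] [DecidableEq k] [Fintype n] [CommRing R]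
    (A : Matrix k n R) (B : Matrix n k R) :
    (A * B).det = ∑ g : k → n, (∏ i, A i (g i)) * (B.submatrix g id).det := by
  have h : (A * B) = Matrix.of fun i => ∑ j, A i j • B j := by
    ext i l
    simp [Matrix.mul_apply, Finset.sum_apply]
  rw [h]
  have h2 : (Matrix.of fun i => ∑ j, A i j • B j).det
      = (Matrix.detRowAlternating (R := R) (n := k)).toMultilinearMap
        (fun i => ∑ j, A i j • B j) := rfl
  rw [h2, (Matrix.detRowAlternating (R := R) (n := k)).toMultilinearMap.map_sum
    (fun (i : k) (j : n) => A i j • B j)]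
  refine Finset.sum_congr rfl fun g _ => ?_
  have h3 : (Matrix.detRowAlternating (R := R) (n := k)).toMultilinearMap
      (fun i => A i (g i) • B (g i)) = (∏ i, A i (g i)) •
      (Matrix.detRowAlternating (R := R) (n := k)).toMultilinearMap (fun i => B (g i)) :=
    MultilinearMap.map_smul_univ _ _ _
  rw [h3, smul_eq_mul]
  congr 1

theorem minorGcd0_dvd_det_mul {k n : Type*} [Fintype k] [DecidableEq k] [Fintype n]
    [DecidableEq n]
    (A : Matrix k n ℤ) (B : Matrix n k ℤ)
    (d : ℕ) (hd : ∀ f : k ↪ n, (d : ℤ) ∣ (B.submatrix f id).det) :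
    (d : ℤ) ∣ (A * B).det := by
  rw [det_mul_expansion]
  refine Finset.dvd_sum fun g _ => Dvd.dvd.mul_left ?_ _
  by_cases hg : Function.Injective g
  · exact hd ⟨g, hg⟩
  · rw [Function.not_injective_iff] at hg
    obtain ⟨i, j, hij, hne⟩ := hg
    have : (B.submatrix g id).det = 0 := by
      apply Matrix.det_zero_of_row_eq hne
      funext l
      simp [Matrix.submatrix_apply, hij]
    simp [this]

theorem minorGcd_dvd_minor {k n : Type*} [Fintype k] [DecidableEq k] [Fintype n]
    [DecidableEq n] (B : Matrix n k ℤ) (f : k ↪ n) :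
    ((minorGcd B : ℤ)) ∣ (B.submatrix f id).det :=
  Int.dvd_natAbs.mp (Int.natCast_dvd_natCast.mpr (Finset.gcd_dvd (Finset.mem_univ f)))

theorem submatrix_mul_right {k n m : Type*} [Fintype k] (B : Matrix n k ℤ) (C : Matrix k k ℤ)
    (f : m → n) : ((B * C).submatrix f id) = (B.submatrix f id) * C := by
  ext i j
  simp [Matrix.mul_apply, Matrix.submatrix_apply]

theorem minorGcd_mul_right {k n : Type*} [Fintype k] [DecidableEq k] [Fintype n]
    [DecidableEq n] (B : Matrix n k ℤ) (C : Matrix k k ℤ) :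
    minorGcd (B * C) = minorGcd B * C.det.natAbs := by
  unfold minorGcd
  rw [show (fun f : k ↪ n => (((B * C).submatrix f id).det).natAbs)
      = fun f : k ↪ n => ((B.submatrix f id).det).natAbs * C.det.natAbs by
    funext f
    rw [submatrix_mul_right, Matrix.det_mul, Int.natAbs_mul]]
  rw [Finset.gcd_mul_right]
  simp

theorem minorGcd_eq_one_of_left_inverse {k n : Type*} [Fintype k] [DecidableEq k] [Fintype n]
    [DecidableEq n] (B : Matrix n k ℤ) (P : Matrix k n ℤ) (h : P * B = 1) :
    minorGcd B = 1 := by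
  have hdvd := minorGcd0_dvd_det_mul P B (minorGcd B) (fun f => minorGcd_dvd_minor B f)
  rw [h, Matrix.det_one] at hdvd
  exact Nat.dvd_one.mp (Int.natCast_dvd_natCast.mp (by exact_mod_cast hdvd))

/-- The coercion `ℤ^n → ℚ^n` as a `ℤ`-linear map. -/
def intCastLM (n : Type*) : (n → ℤ) →ₗ[ℤ] (n → ℚ) where
  toFun v := fun j => (v j : ℚ)
  map_add' a b := by funext j; simp
  map_smul' c a := by funext j; simp

@[simp] theorem intCastLM_apply {n : Type*} (v : n → ℤ) (j : n) :
    intCastLM n v j = (v j : ℚ) := rfl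

theorem intCastLM_injective (n : Type*) : Function.Injective (intCastLM n) := by
  intro a b hab
  funext j
  have := congrFun hab j
  simp only [intCastLM_apply] at this
  exact_mod_cast this

/-- Main abstract lemma: the index of the span of `V` in a saturated subgroup `Γ` with the
same rational span is the gcd of the maximal minors of the matrix with columns `V`. -/
theorem relindex_eq_minorGcd {n ι : Type*} [Fintype n] [DecidableEq n] [Fintype ι]
    [DecidableEq ι]
    (V : ι → n → ℤ) (Γ : AddSubgroup (n → ℤ))
    (hVΓ : ∀ i, V i ∈ Γ)
    (hsat : ∀ (c : ℤ) (p : n → ℤ), c ≠ 0 → c • p ∈ Γ → p ∈ Γ)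
    (hind : LinearIndependent ℚ (fun i => fun j => (V i j : ℚ)))
    (hspan : ∀ p ∈ Γ, (fun j => (p j : ℚ)) ∈
      Submodule.span ℚ (Set.range fun i => fun j => (V i j : ℚ))) :
    (AddSubgroup.closure (Set.range V)).relIndex Γ ≠ 0 ∧
    (AddSubgroup.closure (Set.range V)).relIndex Γ = minorGcd (Matrix.of fun r c => V c r) := by
  classical
  have hindQcomp : LinearIndependent ℚ ((intCastLM n) ∘ V) := hind
  have hindZcomp : LinearIndependent ℤ ((intCastLM n) ∘ V) :=
    (LinearIndependent.iff_fractionRing ℤ ℚ).mpr hindQcomp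
  have hindZ : LinearIndependent ℤ V := LinearIndependent.of_comp (intCastLM n) hindZcomp
  set Γs : Submodule ℤ (n → ℤ) := AddSubgroup.toIntSubmodule Γ with hΓs
  set A : Submodule ℤ (n → ℤ) := Submodule.span ℤ (Set.range V) with hA
  have hle : A ≤ Γs := Submodule.span_le.mpr (by rintro x ⟨i, rfl⟩; exact hVΓ i)
  have hmemΓs : ∀ c, V c ∈ Γs := fun c => hle (Submodule.subset_span ⟨c, rfl⟩)
  set A' : Submodule ℤ ↥Γs := A.comap Γs.subtype with hA'
  let bV : Module.Basis ι ℤ ↥A := Module.Basis.span hindZ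
  let eAA' : ↥A' ≃ₗ[ℤ] ↥A := Submodule.comapSubtypeEquivOfLe hle
  -- Smith normal form of Γs inside ℤ^n
  obtain ⟨o₂, snf₂⟩ := Γs.smithNormalForm (Pi.basisFun ℤ n)
  have ha₂ne : ∀ i, snf₂.a i ≠ 0 := by
    intro i hi
    have h := snf₂.snf i
    rw [hi, zero_smul] at h
    exact snf₂.bN.ne_zero i (by exact_mod_cast Subtype.ext h)
  have ha₂sq : ∀ i, snf₂.a i * snf₂.a i = 1 := by
    intro i
    have hmem : snf₂.bM (snf₂.f i) ∈ Γ := by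
      apply hsat (snf₂.a i) _ (ha₂ne i)
      rw [← snf₂.snf i]
      exact (snf₂.bN i).2
    have hmem' : snf₂.bM (snf₂.f i) ∈ Γs := hmem
    have h2 := snf₂.repr_apply_embedding_eq_repr_smul
      (m := ⟨snf₂.bM (snf₂.f i), hmem'⟩) (i := i)
    have h1 : snf₂.bM.repr (snf₂.bM (snf₂.f i)) (snf₂.f i) = 1 := by simp
    rw [show ((⟨snf₂.bM (snf₂.f i), hmem'⟩ : ↥Γs) : n → ℤ) = snf₂.bM (snf₂.f i) from rfl,
      h1] at h2
    have h3 : snf₂.a i * snf₂.bN.repr ⟨snf₂.bM (snf₂.f i), hmem'⟩ i = 1 := by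
      rw [_root_.map_smul] at h2
      simpa [smul_eq_mul] using h2.symm
    have hu : IsUnit (snf₂.a i) := IsUnit.of_mul_eq_one _ h3
    rcases Int.isUnit_iff.mp hu with h | h <;> simp [h]
  -- Smith normal form of A' inside Γs
  obtain ⟨n', snf₁⟩ := A'.smithNormalForm snf₂.bN
  have ha₁ne : ∀ i, snf₁.a i ≠ 0 := by
    intro i hi
    have h := snf₁.snf i
    rw [hi, zero_smul] at h
    exact snf₁.bN.ne_zero i (by exact_mod_cast Subtype.ext h)
  -- equate index types
  let bVA' : Module.Basis ι ℤ ↥A' := bV.map eAA'.symm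
  let eN : Fin n' ≃ ι := snf₁.bN.indexEquiv bVA'
  have hn'card : n' = Fintype.card ι := by
    simpa using Fintype.card_congr eN
  have ho₂le : o₂ ≤ Fintype.card ι := by
    have hmemW : ∀ i, (intCastLM n) ((snf₂.bN i : n → ℤ)) ∈
        Submodule.span ℚ (Set.range ((intCastLM n) ∘ V)) := by
      intro i
      exact hspan _ (snf₂.bN i).2
    have hZ1 : LinearIndependent ℤ (fun i => ((snf₂.bN i : ↥Γs) : n → ℤ)) :=
      (snf₂.bN.linearIndependent).map' Γs.subtype (Submodule.ker_subtype Γs)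
    have hZ2 : LinearIndependent ℤ (fun i => (intCastLM n) ((snf₂.bN i : ↥Γs) : n → ℤ)) :=
      hZ1.map' (intCastLM n) (LinearMap.ker_eq_bot.mpr (intCastLM_injective n))
    have hQ2 : LinearIndependent ℚ (fun i => (intCastLM n) ((snf₂.bN i : ↥Γs) : n → ℤ)) :=
      (LinearIndependent.iff_fractionRing ℤ ℚ).mp hZ2
    haveI : Module.Finite ℚ (Submodule.span ℚ (Set.range ((intCastLM n) ∘ V))) :=
      Module.Finite.span_of_finite ℚ (Set.finite_range _)
    have hg' : LinearIndependent ℚ (fun i => (⟨(intCastLM n) ((snf₂.bN i : ↥Γs) : n → ℤ),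
        hmemW i⟩ : Submodule.span ℚ (Set.range ((intCastLM n) ∘ V)))) :=
      LinearIndependent.of_comp (Submodule.span ℚ (Set.range ((intCastLM n) ∘ V))).subtype hQ2
    calc o₂ = Fintype.card (Fin o₂) := (Fintype.card_fin o₂).symm
      _ ≤ Module.finrank ℚ (Submodule.span ℚ (Set.range ((intCastLM n) ∘ V))) :=
          hg'.fintype_card_le_finrank
      _ = Fintype.card ι := finrank_span_eq_card hindQcomp
  have ho₂card : o₂ = Fintype.card ι := by
    refine le_antisymm ho₂le ?_
    rw [← hn'card]
    simpa using Fintype.card_le_of_embedding snf₁.f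
  let eO : Fin o₂ ≃ ι := Fintype.equivOfCardEq (by simp [ho₂card])
  -- the index computation
  have hrel : (AddSubgroup.closure (Set.range V)).relIndex Γ
      = ∏ i : Fin n', (snf₁.a i).natAbs := by
    have hAgrp : A.toAddSubgroup = AddSubgroup.closure (Set.range V) :=
      Submodule.span_int_eq_addSubgroupClosure _
    rw [← hAgrp]
    let u : ↥Γ ≃+ ↥Γs :=
      { toFun := fun x => ⟨x.1, x.2⟩
        invFun := fun x => ⟨x.1, x.2⟩
        left_inv := fun x => rfl
        right_inv := fun x => rfl
        map_add' := fun x y => rfl }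
    have hcomap : (A.toAddSubgroup.addSubgroupOf Γ)
        = (A'.toAddSubgroup).comap u.toAddMonoidHom := by
      ext x
      rfl
    have hrel1 : (A.toAddSubgroup).relIndex Γ = (A.toAddSubgroup.addSubgroupOf Γ).index := rfl
    rw [hrel1, hcomap, AddSubgroup.index_comap_of_surjective _ u.surjective]
    rw [snf₁.toAddSubgroup_index_eq_ite,
      if_pos (by simp [hn'card, ho₂card])]
    refine Finset.prod_congr rfl fun i _ => ?_
    rw [Ideal.span_singleton_toAddSubgroup_eq_zmultiples, Int.index_zmultiples]
  -- the gcd computation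
  have hgcd : minorGcd (Matrix.of fun r c => V c r) = ∏ i : Fin n', (snf₁.a i).natAbs := by
    set bM' : Module.Basis ι ℤ ↥Γs := snf₁.bM.reindex eO with hbM'
    set B : Matrix n ι ℤ := Matrix.of (fun r i => ((bM' i : n → ℤ)) r) with hB
    set C : Matrix ι ι ℤ := Matrix.of (fun i c => bM'.repr ⟨V c, hmemΓs c⟩ i) with hC
    have hBC : B * C = Matrix.of fun r c => V c r := by
      ext r c
      rw [Matrix.mul_apply]
      have h1 := congrArg (fun y : ↥Γs => (y : n → ℤ) r) (bM'.sum_repr ⟨V c, hmemΓs c⟩)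
      simp only [AddSubmonoidClass.coe_finset_sum, Finset.sum_apply, SetLike.val_smul,
        Pi.smul_apply, smul_eq_mul] at h1
      rw [show (Matrix.of fun r c => V c r) r c = V c r from rfl, ← h1]
      exact Finset.sum_congr rfl fun i _ => by
        rw [show B r i = ((bM' i : n → ℤ)) r from rfl,
            show C i c = bM'.repr ⟨V c, hmemΓs c⟩ i from rfl, mul_comm]
    -- the basis matrix of Γ has coprime maximal minors
    have hminB : minorGcd B = 1 := by
      set bB : Module.Basis ι ℤ ↥Γs := snf₂.bN.reindex eO with hbB
      set B₂ : Matrix n ι ℤ := Matrix.of (fun r i => ((bB i : n → ℤ)) r) with hB₂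
      have hP : ∃ P : Matrix ι n ℤ, P * B₂ = 1 := by
        refine ⟨Matrix.of (fun i r => snf₂.a (eO.symm i) *
          (snf₂.bM.repr (Pi.single r 1) (snf₂.f (eO.symm i)))), ?_⟩
        ext i j
        rw [Matrix.mul_apply]
        have hxx : ((bB j : n → ℤ)) = ∑ r, ((bB j : n → ℤ)) r • Pi.single r (1:ℤ) := by
          funext l
          rw [Finset.sum_apply]
          simp [Pi.single_apply, eq_comm]
        have h2 : snf₂.bM.repr ((bB j : n → ℤ)) (snf₂.f (eO.symm i))
            = ∑ r, ((bB j : n → ℤ)) r * snf₂.bM.repr (Pi.single r 1) (snf₂.f (eO.symm i)) := by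
          conv_lhs => rw [hxx]
          rw [map_sum, Finsupp.finset_sum_apply]
          exact Finset.sum_congr rfl fun r _ => by
            rw [_root_.map_smul, Finsupp.smul_apply, smul_eq_mul]
        have h4 : snf₂.bM.repr ((bB j : n → ℤ)) (snf₂.f (eO.symm i))
            = if i = j then snf₂.a (eO.symm i) else 0 := by
          rw [hbB, Module.Basis.reindex_apply, snf₂.snf (eO.symm j), _root_.map_smul,
            Finsupp.smul_apply, Module.Basis.repr_self, smul_eq_mul, Finsupp.single_apply]
          by_cases h : i = j
          · subst h; simp
          · have hne : ¬ (snf₂.f (eO.symm j) = snf₂.f (eO.symm i)) := by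
              intro hc
              exact h (eO.symm.injective (snf₂.f.injective hc)).symm
            simp [hne, h]
        have hsum : ∑ r, (Matrix.of (fun i r => snf₂.a (eO.symm i) *
              (snf₂.bM.repr (Pi.single r 1) (snf₂.f (eO.symm i)))) : Matrix ι n ℤ) i r * B₂ r j
            = snf₂.a (eO.symm i) * snf₂.bM.repr ((bB j : n → ℤ)) (snf₂.f (eO.symm i)) := by
          rw [h2, Finset.mul_sum]
          exact Finset.sum_congr rfl fun r _ => by
            rw [show B₂ r j = ((bB j : n → ℤ)) r from rfl]
            simp only [Matrix.of_apply]
            ring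
        rw [hsum, h4]
        by_cases h : i = j
        · subst h
          rw [Matrix.one_apply_eq, if_pos rfl, ha₂sq]
        · rw [Matrix.one_apply_ne h, if_neg h, mul_zero]
      obtain ⟨P, hP⟩ := hP
      have h1 : minorGcd B₂ = 1 := minorGcd_eq_one_of_left_inverse B₂ P hP
      have h2 : B = B₂ * (bB.toMatrix ⇑bM') := by
        ext r i
        rw [Matrix.mul_apply]
        have h1' := congrArg (fun y : ↥Γs => (y : n → ℤ) r) (bB.sum_repr (bM' i))
        simp only [AddSubmonoidClass.coe_finset_sum, Finset.sum_apply, SetLike.val_smul,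
          Pi.smul_apply, smul_eq_mul] at h1'
        rw [show B r i = ((bM' i : n → ℤ)) r from rfl, ← h1']
        refine Finset.sum_congr rfl fun j _ => ?_
        rw [show B₂ r j = ((bB j : n → ℤ)) r from rfl, Module.Basis.toMatrix_apply, mul_comm]
      haveI := Module.Basis.invertibleToMatrix bB bM'
      have h3 : IsUnit (bB.toMatrix ⇑bM').det := Matrix.isUnit_det_of_invertible _
      rw [h2, minorGcd_mul_right, h1, one_mul, Int.isUnit_iff_natAbs_eq.mp h3]
    -- decompose C
    set VA : ι → ↥A := fun c => ⟨V c, Submodule.subset_span ⟨c, rfl⟩⟩ with hVA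
    have hbVA : ∀ c, bV c = VA c := fun c => Module.Basis.span_apply hindZ c
    set bNA : Module.Basis ι ℤ ↥A := (snf₁.bN.map eAA').reindex eN with hbNA
    set w : ι → ↥Γs := fun j => ((snf₁.bN (eN.symm j) : ↥A') : ↥Γs) with hwdef
    have hw : ∀ j, (Submodule.inclusion hle) (bNA j) = w j := by
      intro j
      apply Subtype.ext
      rw [Submodule.coe_inclusion]
      rw [hbNA, Module.Basis.reindex_apply, Module.Basis.map_apply]
      exact Submodule.comapSubtypeEquivOfLe_apply_coe hle _
    set Chat : Matrix ι ι ℤ := Matrix.of (fun i j => bM'.repr (w j) i) with hChatdef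
    set U : Matrix ι ι ℤ := bNA.toMatrix ⇑bV with hU
    have hCU : C = Chat * U := by
      ext i c
      rw [Matrix.mul_apply]
      have hsum' := congrArg (Submodule.inclusion hle) (bNA.sum_repr (bV c))
      rw [map_sum] at hsum'
      have h5 := congrArg (fun y : ↥Γs => bM'.repr y i) hsum'
      simp only [map_sum, _root_.map_smul, Finsupp.finset_sum_apply, Finsupp.smul_apply,
        smul_eq_mul] at h5
      -- h5 : ∑ j, bNA.repr (bV c) j * bM'.repr (inclusion (bNA j)) i = bM'.repr (inclusion (bV c)) i
      have h6 : Submodule.inclusion hle (bV c) = (⟨V c, hmemΓs c⟩ : ↥Γs) := by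
        apply Subtype.ext
        rw [Submodule.coe_inclusion, hbVA]
      rw [h6] at h5
      rw [show C i c = bM'.repr ⟨V c, hmemΓs c⟩ i from rfl, ← h5]
      refine Finset.sum_congr rfl fun j _ => ?_
      rw [show Chat i j = bM'.repr (w j) i from rfl, show U j c = bNA.repr (bV c) j from
        Module.Basis.toMatrix_apply _ _ _ _, ← hw j, mul_comm]
    haveI := Module.Basis.invertibleToMatrix bNA bV
    have hdetU : U.det.natAbs = 1 :=
      Int.isUnit_iff_natAbs_eq.mp (Matrix.isUnit_det_of_invertible _)
    -- determinant of Chat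
    have hentry : ∀ i j, bM'.repr (w j) i
        = if i = eO (snf₁.f (eN.symm j)) then snf₁.a (eN.symm j) else 0 := by
      intro i j
      simp only [hwdef]
      rw [show ((snf₁.bN (eN.symm j) : ↥A') : ↥Γs)
          = snf₁.a (eN.symm j) • snf₁.bM (snf₁.f (eN.symm j)) from snf₁.snf (eN.symm j)]
      rw [_root_.map_smul, Finsupp.smul_apply, smul_eq_mul]
      rw [show snf₁.bM (snf₁.f (eN.symm j)) = bM' (eO (snf₁.f (eN.symm j))) by
        rw [hbM', Module.Basis.reindex_apply, Equiv.symm_apply_apply]]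
      rw [Module.Basis.repr_self, Finsupp.single_apply]
      by_cases h : eO (snf₁.f (eN.symm j)) = i
      · rw [if_pos h, if_pos h.symm, mul_one]
      · rw [if_neg h, if_neg (Ne.symm h), mul_zero]
    have hσinj : Function.Injective (fun j => eO (snf₁.f (eN.symm j))) := by
      intro a b hab
      exact eN.symm.injective (snf₁.f.injective (eO.injective hab))
    let σ : Equiv.Perm ι :=
      Equiv.ofBijective _ ((Finite.injective_iff_bijective).mp hσinj)
    have hσapp : ∀ j, σ j = eO (snf₁.f (eN.symm j)) := fun j => rfl
    have hM : Chat = (Matrix.diagonal (fun j => snf₁.a (eN.symm j))).submatrix ⇑σ.symm id := by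
      ext i j
      rw [show Chat i j = bM'.repr (w j) i from rfl, hentry i j, Matrix.submatrix_apply,
        id_eq, Matrix.diagonal_apply]
      by_cases h : i = σ j
      · have h' : σ.symm i = j := by rw [h, Equiv.symm_apply_apply]
        rw [if_pos (by rw [← hσapp]; exact h), if_pos h', h']
      · have h' : σ.symm i ≠ j := fun hc => h (by rw [← hc, Equiv.apply_symm_apply])
        rw [if_neg (by rw [← hσapp]; exact h), if_neg h']
    have hChatdet : Chat.det.natAbs = ∏ i : Fin n', (snf₁.a i).natAbs := by
      rw [hM, Matrix.det_permute σ.symm, Matrix.det_diagonal, Int.natAbs_mul]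
      have h9 : (∏ i : ι, snf₁.a (eN.symm i)).natAbs = ∏ i : Fin n', (snf₁.a i).natAbs := by
        rw [show (∏ i : ι, snf₁.a (eN.symm i)).natAbs
            = ∏ i : ι, (snf₁.a (eN.symm i)).natAbs from map_prod Int.natAbsHom _ _]
        exact Equiv.prod_comp eN.symm fun i => (snf₁.a i).natAbs
      rcases Int.units_eq_one_or (Equiv.Perm.sign (Equiv.symm σ)) with h | h <;>
        simp [h, h9]
    rw [← hBC, minorGcd_mul_right, hminB, one_mul, hCU, Matrix.det_mul, Int.natAbs_mul,
      hChatdet, hdetU, mul_one]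
  refine ⟨?_, by rw [hrel, hgcd]⟩
  rw [hrel]
  exact Finset.prod_ne_zero_iff.mpr fun i _ => Int.natAbs_ne_zero.mpr (ha₁ne i)

/-- (Ground state degeneracy for the disk-in-annulus geometry of
Fig. 1c/6c.)  A disk with K-matrix `K_d` is surrounded by an annular strip with K-matrix
`K_s`; the outer boundary is gapped by null vectors `Λ_{a,i}` (w.r.t. `K_s`) and the inner
boundary, whose modes have K-matrix `K_b = diag(-K_s, K_d)`, by null vectors `Λ_{b,i}`.
With `K' = [[0, I, 0], [I, -K_s, 0], [0, 0, K_d]]`, `Λ'ᵢ = (K_s Λ_{a,i}, Λ_{a,i}, 0)` for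
`i ≤ N` and `Λ'_{N+j} = (0, Λ_{b,j})`, the matrix `K'` is symmetric with nonzero
determinant, the `Λ'ᵢ` are linearly independent over `ℚ` and satisfy the null vector
condition for `K'`, and the index in `Γ' = {p : Λ'ᵢᵀ K' p = 0 ∀ i}` of the subgroup `A'`
generated by the `Λ'ᵢ` is finite and equals the gcd of the absolute values of the
`(2N+M) × (2N+M)` minors of the matrix `M'` with columns the `Λ'ᵢ`. -/
theorem annulus_ground_state_degeneracy (N M : ℕ) (hN : 1 ≤ N) (hM : 1 ≤ M)
    (Ks : Matrix (Fin (2 * N)) (Fin (2 * N)) ℤ) (hKs : Ks.IsSymm) (hdets : Ks.det ≠ 0)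
    (Kd : Matrix (Fin (2 * M)) (Fin (2 * M)) ℤ) (hKd : Kd.IsSymm) (hdetd : Kd.det ≠ 0)
    (Λa : Fin N → Fin (2 * N) → ℤ)
    (Λb : Fin (N + M) → Fin (2 * N) ⊕ Fin (2 * M) → ℤ)
    (hinda : LinearIndependent ℚ (fun i => fun j => (Λa i j : ℚ)))
    (hindb : LinearIndependent ℚ (fun i => fun j => (Λb i j : ℚ)))
    (hnulla : ∀ i j, Λa i ⬝ᵥ (Ks *ᵥ Λa j) = 0)
    (hnullb : ∀ i j, Λb i ⬝ᵥ ((Matrix.fromBlocks (-Ks) 0 0 Kd) *ᵥ Λb j) = 0) :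
    let K' : Matrix (Fin (2 * N) ⊕ (Fin (2 * N) ⊕ Fin (2 * M)))
        (Fin (2 * N) ⊕ (Fin (2 * N) ⊕ Fin (2 * M))) ℤ :=
      Matrix.fromBlocks 0 (Matrix.fromCols 1 0) (Matrix.fromRows 1 0)
        (Matrix.fromBlocks (-Ks) 0 0 Kd)
    let Λ' : Fin N ⊕ Fin (N + M) → Fin (2 * N) ⊕ (Fin (2 * N) ⊕ Fin (2 * M)) → ℤ :=
      Sum.elim (fun i => Sum.elim (Ks *ᵥ Λa i) (Sum.elim (Λa i) 0))
        (fun j => Sum.elim 0 (Λb j))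
    K'.IsSymm ∧ K'.det ≠ 0 ∧
    LinearIndependent ℚ (fun i => fun j => (Λ' i j : ℚ)) ∧
    (∀ i j, Λ' i ⬝ᵥ (K' *ᵥ Λ' j) = 0) ∧
    AddSubgroup.closure (Set.range Λ') ≤ sectorLattice K' Λ' ∧
    (AddSubgroup.closure (Set.range Λ')).relIndex (sectorLattice K' Λ') ≠ 0 ∧
    (AddSubgroup.closure (Set.range Λ')).relIndex (sectorLattice K' Λ') =
      minorGcd (Matrix.of fun r c => Λ' c r) := by
  intro K' Λ'
  -- symmetry
  have hsymm : K'.IsSymm := by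
    show K'ᵀ = K'
    rw [show K' = Matrix.fromBlocks 0 (Matrix.fromCols 1 0) (Matrix.fromRows 1 0)
      (Matrix.fromBlocks (-Ks) 0 0 Kd) from rfl]
    rw [Matrix.fromBlocks_transpose, Matrix.transpose_fromRows, Matrix.transpose_fromCols,
      Matrix.fromBlocks_transpose]
    simp [hKs.eq, hKd.eq]
  -- generic product with K'
  have e1 : ∀ (x y₁ : Fin (2 * N) → ℤ) (y₂ : Fin (2 * M) → ℤ),
      K' *ᵥ Sum.elim x (Sum.elim y₁ y₂) = Sum.elim y₁
        (Sum.elim (x - Ks *ᵥ y₁) (Kd *ᵥ y₂)) := by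
    intro x y₁ y₂
    rw [show K' = Matrix.fromBlocks 0 (Matrix.fromCols 1 0) (Matrix.fromRows 1 0)
      (Matrix.fromBlocks (-Ks) 0 0 Kd) from rfl]
    rw [Matrix.fromBlocks_mulVec, Sum.elim_comp_inl, Sum.elim_comp_inr,
      Matrix.fromCols_mulVec_sumElim, Matrix.fromRows_mulVec, Matrix.fromBlocks_mulVec,
      Sum.elim_comp_inl, Sum.elim_comp_inr]
    funext z
    rcases z with z | z
    · simp
    · rcases z with z | z <;> simp [Matrix.neg_mulVec, sub_eq_add_neg]
  -- transpose trick for Ks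
  have e2 : ∀ (x y : Fin (2 * N) → ℤ), (Ks *ᵥ x) ⬝ᵥ y = x ⬝ᵥ (Ks *ᵥ y) := by
    intro x y
    rw [← Matrix.vecMul_transpose, ← Matrix.dotProduct_mulVec, hKs.eq]
  -- the null condition
  have hb : ∀ j, Λb j = Sum.elim (Λb j ∘ Sum.inl) (Λb j ∘ Sum.inr) :=
    fun j => (Sum.elim_comp_inl_inr _).symm
  have hnull : ∀ i j, Λ' i ⬝ᵥ (K' *ᵥ Λ' j) = 0 := by
    intro i j
    rcases i with i | i <;> rcases j with j | j
    · show Sum.elim (Ks *ᵥ Λa i) (Sum.elim (Λa i) 0) ⬝ᵥ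
        (K' *ᵥ Sum.elim (Ks *ᵥ Λa j) (Sum.elim (Λa j) 0)) = 0
      rw [e1, sumElim_dotProduct_sumElim, sumElim_dotProduct_sumElim,
        e2, hnulla i j]
      simp
    · show Sum.elim (Ks *ᵥ Λa i) (Sum.elim (Λa i) 0) ⬝ᵥ (K' *ᵥ Sum.elim 0 (Λb j)) = 0
      rw [hb j, e1, sumElim_dotProduct_sumElim, sumElim_dotProduct_sumElim,
        e2]
      simp
    · show Sum.elim 0 (Λb i) ⬝ᵥ (K' *ᵥ Sum.elim (Ks *ᵥ Λa j) (Sum.elim (Λa j) 0)) = 0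
      rw [e1, sumElim_dotProduct_sumElim]
      rw [hb i, sumElim_dotProduct_sumElim]
      simp
    · show Sum.elim 0 (Λb i) ⬝ᵥ (K' *ᵥ Sum.elim 0 (Λb j)) = 0
      rw [hb j, e1, sumElim_dotProduct_sumElim]
      have hKb : Sum.elim ((0 : Fin (2 * N) → ℤ) - Ks *ᵥ (Λb j ∘ Sum.inl)) (Kd *ᵥ (Λb j ∘ Sum.inr))
          = (Matrix.fromBlocks (-Ks) 0 0 Kd) *ᵥ Λb j := by
        rw [Matrix.fromBlocks_mulVec]
        simp [Matrix.neg_mulVec]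
      rw [hKb]
      simp [hnullb i j]
  -- `K'` is nondegenerate
  have hdet : K'.det ≠ 0 := by
    intro h0
    obtain ⟨v, hv0, hv⟩ := Matrix.exists_mulVec_eq_zero_iff.mpr h0
    have hv' : v = Sum.elim (v ∘ Sum.inl)
        (Sum.elim (v ∘ Sum.inr ∘ Sum.inl) (v ∘ Sum.inr ∘ Sum.inr)) := by
      funext z
      rcases z with z | z
      · rfl
      · rcases z with z | z <;> rfl
    rw [hv', e1] at hv
    have h1 : v ∘ Sum.inr ∘ Sum.inl = 0 := funext fun r => congrFun hv (Sum.inl r)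
    have h3 : Kd *ᵥ (v ∘ Sum.inr ∘ Sum.inr) = 0 :=
      funext fun r => congrFun hv (Sum.inr (Sum.inr r))
    have hz : v ∘ Sum.inr ∘ Sum.inr = 0 := by
      by_contra hzz
      exact hdetd (Matrix.exists_mulVec_eq_zero_iff.mp ⟨_, hzz, h3⟩)
    have hx : v ∘ Sum.inl = 0 := by
      have h2 : (v ∘ Sum.inl) - Ks *ᵥ (v ∘ Sum.inr ∘ Sum.inl) = 0 :=
        funext fun r => congrFun hv (Sum.inr (Sum.inl r))
      rw [h1] at h2
      simpa using h2
    apply hv0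
    rw [hv', h1, hx, hz]
    funext z
    rcases z with z | z
    · rfl
    · rcases z with z | z <;> rfl
  -- linear independence
  have hdetsQ : (Ks.map (Int.cast : ℤ → ℚ)).det ≠ 0 := by
    have h := RingHom.map_det (Int.castRingHom ℚ) Ks
    rw [RingHom.mapMatrix_apply] at h
    rw [show Ks.map (Int.cast : ℤ → ℚ) = Ks.map (Int.castRingHom ℚ) from rfl, ← h]
    simpa using hdets
  have hind : LinearIndependent ℚ (fun i => fun j => (Λ' i j : ℚ)) := by
    rw [Fintype.linearIndependent_iff]
    intro c hc
    have hcr : ∀ x, ∑ i, c i * (Λ' i x : ℚ) = 0 := by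
      intro x
      have h := congrFun hc x
      simpa [Finset.sum_apply] using h
    have hca : ∀ i, c (Sum.inl i) = 0 := by
      set u : Fin (2 * N) → ℚ := fun l => ∑ i : Fin N, c (Sum.inl i) * (Λa i l : ℚ) with hu
      have hKu : (Ks.map (Int.cast : ℤ → ℚ)) *ᵥ u = 0 := by
        funext r
        have h := hcr (Sum.inl r)
        rw [Fintype.sum_sum_type] at h
        simp only [show ∀ i : Fin N, Λ' (Sum.inl i) (Sum.inl r) = (Ks *ᵥ Λa i) r
            from fun _ => rfl,
          show ∀ j, Λ' (Sum.inr j) (Sum.inl r) = 0 from fun _ => rfl,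
          Int.cast_zero, mul_zero, Finset.sum_const_zero, add_zero] at h
        rw [Pi.zero_apply]
        calc (Ks.map (Int.cast : ℤ → ℚ) *ᵥ u) r
            = ∑ l, (Ks r l : ℚ) * ∑ i : Fin N, c (Sum.inl i) * (Λa i l : ℚ) := by
              simp [Matrix.mulVec, dotProduct, Matrix.map_apply, hu]
          _ = ∑ i : Fin N, c (Sum.inl i) * ∑ l, (Ks r l : ℚ) * (Λa i l : ℚ) := by
              simp_rw [Finset.mul_sum]
              rw [Finset.sum_comm]
              refine Finset.sum_congr rfl fun i _ => Finset.sum_congr rfl fun l _ => by ring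
          _ = ∑ i : Fin N, c (Sum.inl i) * ((Ks *ᵥ Λa i) r : ℚ) := by
              refine Finset.sum_congr rfl fun i _ => ?_
              congr 1
              push_cast [Matrix.mulVec, dotProduct]
              rfl
          _ = 0 := h
      have hu0 : u = 0 := by
        by_contra huz
        exact hdetsQ (Matrix.exists_mulVec_eq_zero_iff.mp ⟨u, huz, hKu⟩)
      have hgoal : (∑ i : Fin N, c (Sum.inl i) • fun j => (Λa i j : ℚ)) = 0 := by
        funext l
        have h := congrFun hu0 l
        simpa [Finset.sum_apply, hu] using h
      exact fun i => Fintype.linearIndependent_iff.mp hinda _ hgoal i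
    have hcb : ∀ j, c (Sum.inr j) = 0 := by
      have hgoal : (∑ j : Fin (N + M), c (Sum.inr j) • fun s => (Λb j s : ℚ)) = 0 := by
        funext s
        have h := hcr (Sum.inr s)
        rw [Fintype.sum_sum_type] at h
        simp only [hca, zero_mul, Finset.sum_const_zero, zero_add] at h
        simpa [Finset.sum_apply] using
          (show ∑ a, c (Sum.inr a) * (Λb a s : ℚ) = 0 from h)
      exact fun j => Fintype.linearIndependent_iff.mp hindb _ hgoal j
    intro i
    rcases i with i | i
    · exact hca i
    · exact hcb i
  -- rational span of Γ
  have hspan : ∀ p ∈ sectorLattice K' Λ', (fun j => (p j : ℚ)) ∈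
      Submodule.span ℚ (Set.range fun i => fun j => (Λ' i j : ℚ)) := by
    classical
    set Kq : Matrix _ _ ℚ := K'.map (Int.cast : ℤ → ℚ) with hKq
    set Vq : (Fin N ⊕ Fin (N + M)) → _ → ℚ := (fun i => fun j => ((Λ' i j : ℤ) : ℚ)) with hVq
    set L : Matrix (Fin N ⊕ Fin (N + M)) _ ℚ := Matrix.of Vq with hL
    set G : Matrix _ _ ℚ := L * Kq with hG
    have castdot : ∀ (v w : _ → ℤ), ((v ⬝ᵥ (K' *ᵥ w) : ℤ) : ℚ)
        = (fun j => (v j : ℚ)) ⬝ᵥ (Kq *ᵥ (fun j => (w j : ℚ))) := by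
      intro v w
      push_cast [dotProduct, Matrix.mulVec, hKq, Matrix.map_apply]
      rfl
    have hGapply : ∀ (x : _ → ℚ) k, (G *ᵥ x) k = Vq k ⬝ᵥ (Kq *ᵥ x) := by
      intro x k
      calc (G *ᵥ x) k = ∑ j, (∑ r, L k r * Kq r j) * x j := by
            simp [hG, Matrix.mulVec, dotProduct, Matrix.mul_apply]
        _ = ∑ r, ∑ j, L k r * Kq r j * x j := by
            simp_rw [Finset.sum_mul]
            exact Finset.sum_comm
        _ = ∑ r, Vq k r * ∑ j, Kq r j * x j := by
            refine Finset.sum_congr rfl fun r _ => ?_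
            rw [Finset.mul_sum]
            exact Finset.sum_congr rfl fun j _ => by rw [hL]; simp [mul_assoc]
        _ = Vq k ⬝ᵥ (Kq *ᵥ x) := rfl
    have hWker : Submodule.span ℚ (Set.range Vq) ≤ LinearMap.ker G.mulVecLin := by
      rw [Submodule.span_le]
      rintro _ ⟨i, rfl⟩
      rw [SetLike.mem_coe, LinearMap.mem_ker]
      have h0 : G *ᵥ (Vq i) = 0 := by
        funext k
        rw [hGapply, hVq]
        rw [← castdot]
        rw [Pi.zero_apply]
        exact_mod_cast hnull k i
      simpa [Matrix.mulVecLin_apply] using h0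
    have hdetKq : IsUnit Kq.det := by
      have h := RingHom.map_det (Int.castRingHom ℚ) K'
      rw [RingHom.mapMatrix_apply] at h
      rw [isUnit_iff_ne_zero, hKq,
        show K'.map (Int.cast : ℤ → ℚ) = K'.map (Int.castRingHom ℚ) from rfl, ← h]
      simpa using hdet
    have hfr : Module.finrank ℚ
        (Submodule.span ℚ (Set.range Vq)) = Fintype.card (Fin N ⊕ Fin (N + M)) := by
      rw [hVq]
      exact finrank_span_eq_card hind
    have hrankL : L.rank = Fintype.card (Fin N ⊕ Fin (N + M)) := by
      rw [← Matrix.rank_transpose L, Matrix.rank_eq_finrank_span_cols]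
      exact hfr
    have hrankG : G.rank = Fintype.card (Fin N ⊕ Fin (N + M)) := by
      rw [hG, Matrix.rank_mul_eq_left_of_isUnit_det Kq L hdetKq, hrankL]
    have hkerG : Module.finrank ℚ (LinearMap.ker G.mulVecLin)
        = Fintype.card (Fin N ⊕ Fin (N + M)) := by
      have h := LinearMap.finrank_range_add_finrank_ker G.mulVecLin
      rw [Module.finrank_fintype_fun_eq_card] at h
      have hr : Module.finrank ℚ (LinearMap.range G.mulVecLin)
          = Fintype.card (Fin N ⊕ Fin (N + M)) := hrankG
      rw [hr] at h
      have hcards : Fintype.card (Fin (2 * N) ⊕ (Fin (2 * N) ⊕ Fin (2 * M)))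
          = Fintype.card (Fin N ⊕ Fin (N + M)) + Fintype.card (Fin N ⊕ Fin (N + M)) := by
        simp [Fintype.card_sum]
        omega
      omega
    have hWeq : Submodule.span ℚ (Set.range Vq) = LinearMap.ker G.mulVecLin := by
      apply Submodule.eq_of_le_of_finrank_eq hWker
      rw [hkerG, hfr]
    intro p hp
    have hpker : (fun j => ((p j : ℤ) : ℚ)) ∈ LinearMap.ker G.mulVecLin := by
      rw [LinearMap.mem_ker]
      have h0 : G *ᵥ (fun j => ((p j : ℤ) : ℚ)) = 0 := by
        funext k
        rw [hGapply, hVq, ← castdot, Pi.zero_apply]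
        exact_mod_cast hp k
      simpa [Matrix.mulVecLin_apply] using h0
    have hgoal : (fun j => ((p j : ℤ) : ℚ)) ∈ Submodule.span ℚ (Set.range Vq) := by
      rw [hWeq]
      exact hpker
    rw [hVq] at hgoal
    exact hgoal
  have hVΓ : ∀ i, Λ' i ∈ sectorLattice K' Λ' := fun i k => hnull k i
  have hsat : ∀ (c : ℤ) (p : _ → ℤ), c ≠ 0 → c • p ∈ sectorLattice K' Λ' →
      p ∈ sectorLattice K' Λ' := by
    intro c p hc hp k
    have h := hp k
    rw [Matrix.mulVec_smul, dotProduct_smul] at h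
    exact (mul_eq_zero.mp h).resolve_left hc
  obtain ⟨h6, h7⟩ := relindex_eq_minorGcd Λ' (sectorLattice K' Λ') hVΓ hsat hind hspan
  have h5 : AddSubgroup.closure (Set.range Λ') ≤ sectorLattice K' Λ' := by
    rw [AddSubgroup.closure_le]
    rintro x ⟨i, rfl⟩
    exact hVΓ i
  exact ⟨hsymm, hdet, hind, hnull, h5, h6, h7⟩
end

section
/- Let A be an invertible 4×4 complex matrix and B a 4×4 complex matrix satisfying A·B = i·(B·A). Then the characteristic polynomial of B equals X⁴ + det(B); equivalently, there is λ ∈ ℂ with det B = −λ⁴ such that the eigenvalues of B, counted with multiplicity, are λ, iλ, −λ, −iλ. -/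
open Matrix Polynomial

lemma coeff_comp_C_mul_X {R : Type*} [CommRing R] (p : R[X]) (c : R) (k : ℕ) :
    (p.comp (C c * X)).coeff k = c ^ k * p.coeff k := by
  rw [comp_eq_sum_left, coeff_sum, Polynomial.sum_def]
  simp only [mul_pow, ← C_pow, ← mul_assoc, ← C_mul, coeff_C_mul, coeff_X_pow,
    mul_ite, mul_zero, mul_one]
  rw [Finset.sum_ite_eq p.support k (fun n => p.coeff n * c ^ n)]
  split_ifs with hk
  · ring
  · rw [Polynomial.notMem_support_iff.mp hk, mul_zero]

lemma eval_charpoly' {n : Type*} [Fintype n] [DecidableEq n] {R : Type*} [CommRing R]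
    (M : Matrix n n R) (x : R) : M.charpoly.eval x = (x • (1 : Matrix n n R) - M).det := by
  rw [Matrix.charpoly, ← coe_evalRingHom, RingHom.map_det]
  congr 1
  ext i j
  by_cases hij : i = j
  · subst hij; simp [charmatrix_apply_eq, Matrix.smul_apply]
  · simp [charmatrix_apply_ne _ _ _ hij, Matrix.one_apply_ne hij, Matrix.smul_apply]

/-- If `A` is an invertible `4 × 4` complex matrix and `B` satisfies
`A B = i · (B A)`, then the characteristic polynomial of `B` is `X⁴ + det B` (so the
eigenvalues of `B` are `λ, iλ, -λ, -iλ` with `det B = -λ⁴`). -/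
theorem charpoly_of_clock_shift (A B : Matrix (Fin 4) (Fin 4) ℂ) (hA : IsUnit A.det)
    (h : A * B = Complex.I • (B * A)) :
    B.charpoly = X ^ 4 + C B.det := by
  set p := B.charpoly with hp
  -- Step 1: eval symmetry
  have key : ∀ x : ℂ, p.eval x = p.eval (-Complex.I * x) := by
    intro x
    rw [eval_charpoly', eval_charpoly']
    have h1 : A * (x • (1 : Matrix (Fin 4) (Fin 4) ℂ) - B)
        = (x • (1 : Matrix (Fin 4) (Fin 4) ℂ) - Complex.I • B) * A := by
      rw [Matrix.mul_sub, Matrix.sub_mul, Matrix.mul_smul, Matrix.smul_mul,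
        Matrix.smul_mul, Matrix.mul_one, Matrix.one_mul, h]
    have h2 : (x • (1 : Matrix (Fin 4) (Fin 4) ℂ) - Complex.I • B)
        = Complex.I • (((-Complex.I * x) • (1 : Matrix (Fin 4) (Fin 4) ℂ)) - B) := by
      have hx : Complex.I * (-Complex.I * x) = x := by
        linear_combination (-x) * Complex.I_mul_I
      rw [smul_sub, smul_smul, hx]
    have hdet := congrArg Matrix.det h1
    rw [Matrix.det_mul, Matrix.det_mul, mul_comm A.det] at hdet
    have hcancel := mul_right_cancel₀ hA.ne_zero hdet
    rw [hcancel, h2, Matrix.det_smul]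
    simp [Fintype.card_fin]
  -- Step 2: p = p.comp (C (-I) * X)
  have hcomp : p = p.comp (C (-Complex.I) * X) := by
    apply Polynomial.funext
    intro x
    rw [eval_comp, eval_mul, eval_C, eval_X]
    exact key x
  -- Step 3: coefficient relation
  have hcoeff : ∀ k, p.coeff k = (-Complex.I) ^ k * p.coeff k := by
    intro k
    conv_lhs => rw [hcomp]
    exact coeff_comp_C_mul_X p (-Complex.I) k
  have hzero : ∀ (a c : ℂ), c = a * c → a ≠ 1 → c = 0 := by
    intro a c hc ha
    have h0 : (1 - a) * c = 0 := by linear_combination hc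
    rcases mul_eq_zero.mp h0 with h' | h'
    · exact absurd (by linear_combination -h') ha
    · exact h'
  have hdeg : p.natDegree = 4 := by
    rw [hp, Matrix.charpoly_natDegree_eq_dim, Fintype.card_fin]
  have hmon : p.Monic := Matrix.charpoly_monic B
  have hc0 : p.coeff 0 = B.det := by
    have := Matrix.det_eq_sign_charpoly_coeff B
    rw [Fintype.card_fin] at this
    norm_num at this
    exact this.symm
  ext k
  match k with
  | 0 => simpa using hc0
  | 1 =>
    rw [hzero _ _ (hcoeff 1) (by simp [Complex.ext_iff])]
    simp
  | 2 =>
    rw [hzero _ _ (hcoeff 2) (by norm_num [pow_succ, Complex.ext_iff])]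
    simp
  | 3 =>
    rw [hzero _ _ (hcoeff 3) (by norm_num [pow_succ, Complex.ext_iff])]
    simp
  | 4 =>
    have : p.coeff 4 = 1 := by
      have := hmon.leadingCoeff
      rwa [Polynomial.leadingCoeff, hdeg] at this
    rw [this]
    simp [coeff_C]
  | (k + 5) =>
    rw [Polynomial.coeff_eq_zero_of_natDegree_lt (by omega : p.natDegree < k + 5)]
    simp [coeff_X_pow, coeff_C]
end

section
/- Let 𝒦 be the 4×4 integer matrix with rows (0,2,1,1), (2,0,3,−3), (1,3,1,0), (1,−3,0,−1), let τ = (0,4,1,1) and χ = (0,0,0,1). Then 𝒦 is invertible over ℚ, the additive subgroup {lᵀ𝒦⁻¹τ : l ∈ ℤ⁴} of ℚ equals (1/2)·ℤ, and χᵀ𝒦⁻¹τ = −1/2; in particular (1/e*) = 2 is even while (1/e*)·χᵀ𝒦⁻¹τ = −1 is odd. -/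
open Matrix

/-- (Counterexample beyond Abelian spin Hall insulators.)  For the `4×4`
integer K-matrix `𝒦` with rows `(0,2,1,1), (2,0,3,-3), (1,3,1,0), (1,-3,0,-1)`, charge
vector `τ = (0,4,1,1)` and time-reversal vector `χ = (0,0,0,1)`, the matrix `𝒦` is
invertible over `ℚ`, the additive subgroup `{lᵀ 𝒦⁻¹ τ : l ∈ ℤ⁴}` of `ℚ` equals `(1/2)·ℤ`,
and `χᵀ 𝒦⁻¹ τ = -1/2`; in particular, `1/e* = 2` is even while
`(1/e*) · χᵀ 𝒦⁻¹ τ = -1` is odd. -/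
theorem counterexample_general_abelian_insulator :
    let 𝒦 : Matrix (Fin 4) (Fin 4) ℚ :=
      !![0, 2, 1, 1; 2, 0, 3, -3; 1, 3, 1, 0; 1, -3, 0, -1]
    let τ : Fin 4 → ℚ := ![0, 4, 1, 1]
    let χ : Fin 4 → ℚ := ![0, 0, 0, 1]
    IsUnit 𝒦.det ∧
    {x : ℚ | ∃ l : Fin 4 → ℤ, x = (fun i => (l i : ℚ)) ⬝ᵥ (𝒦⁻¹ *ᵥ τ)} =
      {x : ℚ | ∃ n : ℤ, x = (n : ℚ) / 2} ∧
    χ ⬝ᵥ (𝒦⁻¹ *ᵥ τ) = -1 / 2 ∧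
    (2 : ℚ) * (χ ⬝ᵥ (𝒦⁻¹ *ᵥ τ)) = -1 := by
  intro 𝒦 τ χ
  have h1 : 𝒦 * !![0, -1/4, 3/4, 3/4; -1/4, 0, 1/4, -1/4; 3/4, 1/4, -1/2, 0;
      3/4, -1/4, 0, 1/2] = 1 := by
    simp only [𝒦]
    ext i j
    fin_cases i <;> fin_cases j <;>
      norm_num [Matrix.mul_apply, Fin.sum_univ_four, Matrix.one_apply,
        Matrix.vecHead, Matrix.vecTail, Fin.ext_iff] <;> simp <;> norm_num
  have hu : IsUnit 𝒦.det := Matrix.isUnit_det_of_right_inverse h1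
  have hinv : 𝒦⁻¹ = !![0, -1/4, 3/4, 3/4; -1/4, 0, 1/4, -1/4; 3/4, 1/4, -1/2, 0;
      3/4, -1/4, 0, 1/2] := Matrix.inv_eq_right_inv h1
  have hv : 𝒦⁻¹ *ᵥ τ = ![1/2, 0, 1/2, -1/2] := by
    rw [hinv]
    simp only [τ]
    funext i
    fin_cases i <;>
      norm_num [Matrix.mulVec, dotProduct, Fin.sum_univ_four,
        Matrix.vecHead, Matrix.vecTail] <;> simp <;> norm_num
  refine ⟨hu, ?_, ?_, ?_⟩
  · ext x
    simp only [Set.mem_setOf_eq, hv]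
    constructor
    · rintro ⟨l, rfl⟩
      refine ⟨l 0 + l 2 - l 3, ?_⟩
      simp [dotProduct, Fin.sum_univ_four]
      ring
    · rintro ⟨n, rfl⟩
      refine ⟨![n, 0, 0, 0], ?_⟩
      simp [dotProduct, Fin.sum_univ_four]
      ring
  · rw [hv]
    simp only [χ]
    norm_num [dotProduct, Fin.sum_univ_four]
    simp
  · rw [hv]
    simp only [χ]
    norm_num [dotProduct, Fin.sum_univ_four]
    simp
end
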